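/- arXiv:2107.04269 — 3 statements merged into one kernel-verified Lean document; each statement's English description precedes it below -/
import Mathlib

section
/- Let A, N_1, …, N_m ∈ ℝ^{n×n}, let u = (u_1,…,u_m)^⊤ be a continuous control, let Φ be the fundamental solution of the bilinear system, let K ∈ ℝ^{n×n} be symmetric positive semidefinite and γ > 0. Then for all 0 ≤ s ≤ t, Φ(t,s) K Φ(t,s)^⊤ ≤ exp{∫_s^t ‖γ u⁰(v)‖₂² dv} · Z_γ(t−s, K) in the positive semidefinite order, where Z_γ(·,K) solves the generalized Lyapunov matrix differential equation with initial value K. -/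
open MeasureTheory Matrix
open scoped Classical

set_option linter.unusedVariables false

set_option maxHeartbeats 1000000
/-! ### Auxiliary machinery -/

section ExpAux
attribute [local instance] Matrix.linftyOpNormedRing Matrix.linftyOpNormedAlgebra

lemma expEntry_hasDerivAt {n : ℕ} (A : Matrix (Fin n) (Fin n) ℝ) (t : ℝ) (i j : Fin n) :
    HasDerivAt (fun τ : ℝ => (NormedSpace.exp (τ • A)) i j)
      ((NormedSpace.exp (t • A) * A) i j) t := by
  haveI : CompleteSpace (Matrix (Fin n) (Fin n) ℝ) := FiniteDimensional.complete ℝ _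
  have h := hasDerivAt_exp_smul_const (𝕂 := ℝ) A t
  let e : Matrix (Fin n) (Fin n) ℝ →ₗ[ℝ] ℝ :=
    { toFun := fun M => M i j, map_add' := fun a b => rfl, map_smul' := fun c a => rfl }
  exact (LinearMap.toContinuousLinearMap e).hasFDerivAt.comp_hasDerivAt t h

end ExpAux

section Gronwall

lemma gronwall_zero {f : ℝ → ℝ} {s t K : ℝ} (hst : s ≤ t) (hK : 0 ≤ K)
    (hc : ContinuousOn f (Set.Icc s t))
    (hle : ∀ τ ∈ Set.Icc s t, f τ ≤ K * ∫ r in s..τ, f r) :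
    ∀ τ ∈ Set.Icc s t, f τ ≤ 0 := by
  set I : ℝ → ℝ := fun τ => ∫ r in s..τ, f r with hIdef
  have hfint : ∀ τ ∈ Set.Icc s t, IntervalIntegrable f volume s τ := by
    intro τ hτ
    apply ContinuousOn.intervalIntegrable
    apply hc.mono
    rw [Set.uIcc_of_le hτ.1]
    exact Set.Icc_subset_Icc le_rfl hτ.2
  have hIc : ContinuousOn I (Set.Icc s t) := by
    have h0 : Set.uIcc s t = Set.Icc s t := Set.uIcc_of_le hst
    have := intervalIntegral.continuousOn_primitive_interval (a := s) (b := t) (μ := volume)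
      (f := f) (by rw [h0]; exact hc.integrableOn_Icc)
    rwa [h0] at this
  have hI' : ∀ τ ∈ Set.Ioo s t, HasDerivAt I (f τ) τ := by
    intro τ hτ
    have hcox : ContinuousOn f (Set.Ioo s t) := hc.mono Set.Ioo_subset_Icc_self
    apply intervalIntegral.integral_hasDerivAt_right (hfint τ ⟨hτ.1.le, hτ.2.le⟩)
    · exact hcox.stronglyMeasurableAtFilter isOpen_Ioo τ hτ
    · exact (hcox.continuousAt (Ioo_mem_nhds hτ.1 hτ.2))
  set Θ : ℝ → ℝ := fun τ => Real.exp (-(K * τ)) * I τ with hΘdef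
  have hΘ' : ∀ τ ∈ Set.Ioo s t, HasDerivAt Θ
      (Real.exp (-(K * τ)) * (f τ - K * I τ)) τ := by
    intro τ hτ
    have h1 : HasDerivAt (fun τ : ℝ => Real.exp (-(K * τ))) (-K * Real.exp (-(K * τ))) τ := by
      have : HasDerivAt (fun τ : ℝ => -(K * τ)) (-K) τ := by
        simpa using ((hasDerivAt_id τ).const_mul K).fun_neg
      simpa [mul_comm] using this.exp
    have := h1.fun_mul (hI' τ hτ)
    refine this.congr_deriv ?_
    ring
  have hanti : AntitoneOn Θ (Set.Icc s t) := by
    apply antitoneOn_of_deriv_nonpos (convex_Icc s t)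
    · exact (Real.continuous_exp.comp (by continuity)).continuousOn.mul hIc
    · intro τ hτ
      rw [interior_Icc] at hτ
      exact (hΘ' τ hτ).differentiableAt.differentiableWithinAt
    · intro τ hτ
      rw [interior_Icc] at hτ
      rw [(hΘ' τ hτ).deriv]
      have h2 := hle τ ⟨hτ.1.le, hτ.2.le⟩
      have h3 : Real.exp (-(K * τ)) > 0 := Real.exp_pos _
      nlinarith
  intro τ hτ
  have hΘle : Θ τ ≤ Θ s := hanti (Set.left_mem_Icc.2 hst) hτ hτ.1
  have hΘs : Θ s = 0 := by simp [hΘdef, hIdef]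
  have hIτ : I τ ≤ 0 := by
    have h3 : (0:ℝ) < Real.exp (-(K * τ)) := Real.exp_pos _
    have h4 : Real.exp (-(K * τ)) * I τ ≤ 0 := by
      calc Real.exp (-(K*τ)) * I τ = Θ τ := rfl
      _ ≤ Θ s := hΘle
      _ = 0 := hΘs
    nlinarith
  calc f τ ≤ K * I τ := hle τ hτ
    _ ≤ 0 := mul_nonpos_of_nonneg_of_nonpos hK hIτ

end Gronwall

section MatrixCalculus

attribute [local instance] Matrix.normedAddCommGroup Matrix.normedSpace

variable {n : ℕ}

lemma hasDerivAt_matrix {f : ℝ → Matrix (Fin n) (Fin n) ℝ} {f' : Matrix (Fin n) (Fin n) ℝ} {t : ℝ} :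
    HasDerivAt f f' t ↔ ∀ i j, HasDerivAt (fun τ => f τ i j) (f' i j) t :=
  ⟨fun h i j => hasDerivAt_pi.1 (hasDerivAt_pi.1 h i) j,
   fun h => hasDerivAt_pi.2 fun i => hasDerivAt_pi.2 fun j => h i j⟩

lemma HasDerivAt.matmul {f g : ℝ → Matrix (Fin n) (Fin n) ℝ} {f' g' : Matrix (Fin n) (Fin n) ℝ}
    {t : ℝ} (hf : HasDerivAt f f' t) (hg : HasDerivAt g g' t) :
    HasDerivAt (fun τ => f τ * g τ) (f' * g t + f t * g') t := by
  rw [hasDerivAt_matrix] at *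
  intro i j
  have : ∀ k : Fin n, k ∈ Finset.univ → HasDerivAt (fun τ => f τ i k * g τ k j)
      (f' i k * g t k j + f t i k * g' k j) t := fun k _ => (hf i k).mul (hg k j)
  have h2 := HasDerivAt.fun_sum this
  simp only [Matrix.mul_apply, Matrix.add_apply]
  refine h2.congr_deriv ?_
  rw [← Finset.sum_add_distrib]

lemma HasDerivAt.mtranspose {f : ℝ → Matrix (Fin n) (Fin n) ℝ} {f' : Matrix (Fin n) (Fin n) ℝ}
    {t : ℝ} (hf : HasDerivAt f f' t) : HasDerivAt (fun τ => (f τ)ᵀ) f'ᵀ t := by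
  rw [hasDerivAt_matrix] at *
  intro i j
  simpa using hf j i

lemma HasDerivAt.qf {f : ℝ → Matrix (Fin n) (Fin n) ℝ} {f' : Matrix (Fin n) (Fin n) ℝ} {t : ℝ}
    (hf : HasDerivAt f f' t) (x : Fin n → ℝ) :
    HasDerivAt (fun τ => x ⬝ᵥ (f τ *ᵥ x)) (x ⬝ᵥ (f' *ᵥ x)) t := by
  rw [hasDerivAt_matrix] at hf
  simp only [dotProduct, Matrix.mulVec, dotProduct]
  apply HasDerivAt.fun_sum
  intro i _
  have : ∀ k : Fin n, k ∈ Finset.univ → HasDerivAt (fun τ => f τ i k * x k) (f' i k * x k) t :=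
    fun k _ => (hf i k).mul_const _
  simpa [Finset.mul_sum] using (HasDerivAt.fun_sum this).const_mul (x i)

lemma Z_symm {m : ℕ} (A : Matrix (Fin n) (Fin n) ℝ) (N : Fin m → Matrix (Fin n) (Fin n) ℝ)
    (γ : ℝ) (K : Matrix (Fin n) (Fin n) ℝ) (hK : Kᵀ = K)
    (Z : ℝ → Matrix (Fin n) (Fin n) ℝ) (hZ0 : Z 0 = K)
    (hZode : ∀ τ, 0 ≤ τ →
      HasDerivAt Z (A * Z τ + Z τ * Aᵀ + (γ ^ 2)⁻¹ • ∑ k, N k * Z τ * (N k)ᵀ) τ)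
    (τ : ℝ) (hτ : 0 ≤ τ) : (Z τ)ᵀ = Z τ := by
  set c : ℝ := (γ ^ 2)⁻¹ with hc
  set L : Matrix (Fin n) (Fin n) ℝ →ₗ[ℝ] Matrix (Fin n) (Fin n) ℝ :=
    { toFun := fun M => A * M + M * Aᵀ + c • ∑ k, N k * M * (N k)ᵀ
      map_add' := by
        intro M M'
        simp [Matrix.mul_add, Matrix.add_mul, Finset.sum_add_distrib, smul_add]
        abel
      map_smul' := by
        intro a M
        simp [Matrix.mul_smul, Matrix.smul_mul, smul_add, Finset.smul_sum, smul_comm a c]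
    } with hL
  have hlip := (LinearMap.toContinuousLinearMap L).lipschitz
  have hcoe : ⇑(LinearMap.toContinuousLinearMap L) = ⇑L := by
    ext M
    simp
  replace hlip := (show LipschitzWith _ ⇑L from hlip)
  have hmt : ∀ (f : ℝ → Matrix (Fin n) (Fin n) ℝ) (f' : Matrix (Fin n) (Fin n) ℝ) (r : ℝ),
      HasDerivAt f f' r → HasDerivAt (fun ρ => (f ρ)ᵀ) f'ᵀ r := by
    intro f f' r hf
    exact hf.mtranspose
  have hT : ∀ r, 0 ≤ r → HasDerivAt (fun ρ => (Z ρ)ᵀ) (L ((Z r)ᵀ)) r := by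
    intro r hr
    have h := hmt _ _ _ (hZode r hr)
    convert h using 1
    simp [hL, Matrix.transpose_add, Matrix.transpose_mul, Matrix.transpose_smul,
      Matrix.transpose_sum, Matrix.mul_assoc]
    abel
  have hZv : ∀ r, 0 ≤ r → HasDerivAt Z (L (Z r)) r := by
    intro r hr
    exact hZode r hr
  have key := ODE_solution_unique (v := fun _ M => L M) (fun _ => hlip)
    (f := fun ρ => (Z ρ)ᵀ) (g := Z) (a := 0) (b := τ)
    (fun r hr => ((hT r hr.1).continuousAt).continuousWithinAt)
    (fun r hr => (hT r hr.1).hasDerivWithinAt)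
    (fun r hr => ((hZv r hr.1).continuousAt).continuousWithinAt)
    (fun r hr => (hZv r hr.1).hasDerivWithinAt)
    (by simp [hZ0, hK])
  exact key (Set.mem_Icc.2 ⟨hτ, le_rfl⟩)

/-! #### The sup-of-negative-quadratic-form functional -/

lemma qf_abs_le (M : Matrix (Fin n) (Fin n) ℝ) {x : Fin n → ℝ}
    (hx : x ∈ Metric.closedBall (0 : Fin n → ℝ) 1) :
    |x ⬝ᵥ (M *ᵥ x)| ≤ (n : ℝ)^2 * ‖M‖ := by
  have hxi : ∀ i, |x i| ≤ 1 := by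
    intro i
    have h1 : ‖x‖ ≤ 1 := by simpa using hx
    calc |x i| = ‖x i‖ := rfl
    _ ≤ ‖x‖ := norm_le_pi_norm x i
    _ ≤ 1 := h1
  have hM : ∀ i j, |M i j| ≤ ‖M‖ := fun i j => M.norm_entry_le_entrywise_sup_norm
  calc |x ⬝ᵥ (M *ᵥ x)| ≤ ∑ i, |x i * (M *ᵥ x) i| := Finset.abs_sum_le_sum_abs _ _
    _ ≤ ∑ i : Fin n, ∑ j : Fin n, ‖M‖ := by
        apply Finset.sum_le_sum
        intro i _
        rw [abs_mul]
        calc |x i| * |(M *ᵥ x) i| ≤ 1 * |(M *ᵥ x) i| :=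
              mul_le_mul_of_nonneg_right (hxi i) (abs_nonneg _)
        _ = |∑ j, M i j * x j| := by simp [Matrix.mulVec, dotProduct]
        _ ≤ ∑ j, |M i j * x j| := Finset.abs_sum_le_sum_abs _ _
        _ ≤ ∑ j : Fin n, ‖M‖ := by
            apply Finset.sum_le_sum
            intro j _
            rw [abs_mul]
            calc |M i j| * |x j| ≤ ‖M‖ * 1 :=
                  mul_le_mul (hM i j) (hxi j) (abs_nonneg _) (norm_nonneg _)
            _ = ‖M‖ := mul_one _
    _ = (n : ℝ)^2 * ‖M‖ := by simp [Finset.sum_const]; ring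

noncomputable def Psi (M : Matrix (Fin n) (Fin n) ℝ) : ℝ :=
  ⨆ x : Metric.closedBall (0 : Fin n → ℝ) 1, -(x.1 ⬝ᵥ (M *ᵥ x.1))

instance : Nonempty (Metric.closedBall (0 : Fin n → ℝ) 1) :=
  ⟨⟨0, Metric.mem_closedBall_self zero_le_one⟩⟩

lemma Psi_bddAbove (M : Matrix (Fin n) (Fin n) ℝ) :
    BddAbove (Set.range fun x : Metric.closedBall (0 : Fin n → ℝ) 1 =>
      -(x.1 ⬝ᵥ (M *ᵥ x.1))) := by
  refine ⟨(n : ℝ)^2 * ‖M‖, ?_⟩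
  rintro y ⟨x, rfl⟩
  have h1 := qf_abs_le M x.2
  have h2 := neg_le_abs (x.1 ⬝ᵥ (M *ᵥ x.1))
  simp only []
  linarith

lemma le_Psi (M : Matrix (Fin n) (Fin n) ℝ) {x : Fin n → ℝ}
    (hx : x ∈ Metric.closedBall (0 : Fin n → ℝ) 1) :
    -(x ⬝ᵥ (M *ᵥ x)) ≤ Psi M :=
  le_ciSup (Psi_bddAbove M) ⟨x, hx⟩

lemma Psi_nonneg (M : Matrix (Fin n) (Fin n) ℝ) : 0 ≤ Psi M := by
  have := le_Psi M (Metric.mem_closedBall_self zero_le_one)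
  simpa using this

lemma neg_qf_le_Psi (M : Matrix (Fin n) (Fin n) ℝ) (y : Fin n → ℝ) :
    -(y ⬝ᵥ (M *ᵥ y)) ≤ ‖y‖^2 * Psi M := by
  rcases eq_or_ne y 0 with rfl | hy
  · simp
  · have hny : (0:ℝ) < ‖y‖ := norm_pos_iff.2 hy
    set z : Fin n → ℝ := ‖y‖⁻¹ • y with hz
    have hzball : z ∈ Metric.closedBall (0 : Fin n → ℝ) 1 := by
      simp only [Metric.mem_closedBall, dist_zero_right, hz, norm_smul]
      simp [abs_of_pos hny, inv_mul_cancel₀ hny.ne']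
    have hq : z ⬝ᵥ (M *ᵥ z) = ‖y‖⁻¹^2 * (y ⬝ᵥ (M *ᵥ y)) := by
      simp [hz, Matrix.mulVec_smul, dotProduct_smul, smul_dotProduct]
      ring
    have := le_Psi M hzball
    rw [hq] at this
    have h2 : -(y ⬝ᵥ (M *ᵥ y)) = ‖y‖^2 * (-(‖y‖⁻¹^2 * (y ⬝ᵥ (M *ᵥ y)))) := by
      field_simp
    rw [h2]
    exact mul_le_mul_of_nonneg_left this (by positivity)

lemma Psi_lipschitz : LipschitzWith (⟨(n:ℝ)^2, by positivity⟩) (Psi (n := n)) := by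
  apply LipschitzWith.of_dist_le_mul
  intro M M'
  have key : ∀ M M' : Matrix (Fin n) (Fin n) ℝ, Psi M ≤ Psi M' + (n:ℝ)^2 * ‖M - M'‖ := by
    intro M M'
    apply ciSup_le
    intro x
    have h1 : -(x.1 ⬝ᵥ (M *ᵥ x.1)) = -(x.1 ⬝ᵥ (M' *ᵥ x.1)) + -(x.1 ⬝ᵥ ((M - M') *ᵥ x.1)) := by
      simp [Matrix.sub_mulVec, dotProduct_sub]
      ring
    rw [h1]
    have h2 := le_Psi M' x.2
    have h3 : -(x.1 ⬝ᵥ ((M - M') *ᵥ x.1)) ≤ (n:ℝ)^2 * ‖M - M'‖ := by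
      have ha := qf_abs_le (M - M') x.2
      have hb := neg_le_abs (x.1 ⬝ᵥ ((M - M') *ᵥ x.1))
      linarith
    linarith
  rw [Real.dist_eq, abs_sub_le_iff]
  constructor
  · have := key M M'
    have hd : dist M M' = ‖M - M'‖ := dist_eq_norm _ _
    change _ ≤ (n:ℝ)^2 * dist M M'
    linarith [hd ▸ this]
  · have := key M' M
    have hd : dist M M' = ‖M' - M‖ := dist_eq_norm' _ _
    change _ ≤ (n:ℝ)^2 * dist M M'
    linarith [hd ▸ this]


lemma continuous_qf (x : Fin n → ℝ) :
    Continuous fun M : Matrix (Fin n) (Fin n) ℝ => x ⬝ᵥ (M *ᵥ x) := by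
  simp only [Matrix.mulVec, dotProduct]
  apply continuous_finset_sum
  intro i _
  apply Continuous.mul continuous_const
  apply continuous_finset_sum
  intro j _
  exact (continuous_apply_apply i j).mul continuous_const

lemma sum_mulVec' {ι : Type*} (sf : Finset ι) (M : ι → Matrix (Fin n) (Fin n) ℝ)
    (x : Fin n → ℝ) : (∑ k ∈ sf, M k) *ᵥ x = ∑ k ∈ sf, (M k *ᵥ x) := by
  ext i
  simp only [Matrix.mulVec, dotProduct, Matrix.sum_apply, Finset.sum_apply, Finset.sum_mul]
  rw [Finset.sum_comm]

lemma dotProduct_sum' {ι : Type*} (sf : Finset ι) (x : Fin n → ℝ) (v : ι → Fin n → ℝ) :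
    x ⬝ᵥ (∑ k ∈ sf, v k) = ∑ k ∈ sf, x ⬝ᵥ v k := by
  simp only [dotProduct, Finset.sum_apply, Finset.mul_sum]
  rw [Finset.sum_comm]

lemma ContinuousOn.matmul' {X : Type*} [TopologicalSpace X] {f g : X → Matrix (Fin n) (Fin n) ℝ}
    {S : Set X} (hf : ContinuousOn f S) (hg : ContinuousOn g S) :
    ContinuousOn (fun x => f x * g x) S :=
  hf.mul hg

lemma qf_conj (Bm M : Matrix (Fin n) (Fin n) ℝ) (x : Fin n → ℝ) :
    x ⬝ᵥ ((Bm * M * Bmᵀ) *ᵥ x) = (Bmᵀ *ᵥ x) ⬝ᵥ (M *ᵥ (Bmᵀ *ᵥ x)) := by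
  rw [← Matrix.mulVec_mulVec, ← Matrix.mulVec_mulVec, Matrix.dotProduct_mulVec x Bm,
    ← Matrix.mulVec_transpose]

lemma norm_transpose_mulVec_le (M : Matrix (Fin n) (Fin n) ℝ) {x : Fin n → ℝ} (hx : ‖x‖ ≤ 1) :
    ‖Mᵀ *ᵥ x‖ ≤ (n : ℝ) * ‖M‖ := by
  have hxi : ∀ i, |x i| ≤ 1 := fun i =>
    le_trans (norm_le_pi_norm x i) hx
  have hM : ∀ i j, |M i j| ≤ ‖M‖ := fun i j => M.norm_entry_le_entrywise_sup_norm
  have hnn : (0:ℝ) ≤ (n : ℝ) * ‖M‖ := by positivity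
  rw [pi_norm_le_iff_of_nonneg hnn]
  intro i
  calc ‖(Mᵀ *ᵥ x) i‖ = |∑ j, M j i * x j| := by simp [Matrix.mulVec, dotProduct]
  _ ≤ ∑ j, |M j i * x j| := Finset.abs_sum_le_sum_abs _ _
  _ ≤ ∑ _j : Fin n, ‖M‖ := by
      apply Finset.sum_le_sum
      intro j _
      rw [abs_mul]
      calc |M j i| * |x j| ≤ ‖M‖ * 1 :=
            mul_le_mul (hM j i) (hxi j) (abs_nonneg _) (norm_nonneg _)
      _ = ‖M‖ := mul_one _
  _ = (n : ℝ) * ‖M‖ := by simp [Finset.sum_const]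

end MatrixCalculus

section StepB

lemma stepB_lemma {n m : ℕ} (A : Matrix (Fin n) (Fin n) ℝ) (N : Fin m → Matrix (Fin n) (Fin n) ℝ)
    (γ : ℝ) (hγ : γ ≠ 0) (uk : Fin m → ℝ) (Φr K Z' : Matrix (Fin n) (Fin n) ℝ) (αr : ℝ) :
    (αr • (A * Z' + Z' * Aᵀ + (γ^2)⁻¹ • ∑ k, N k * Z' * (N k)ᵀ)
        + ((∑ k, (γ * (if N k = 0 then (0:ℝ) else uk k))^2) * αr) • Z'
      - ((A * Φr + ∑ k, uk k • (N k * Φr)) * K * Φrᵀ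
          + Φr * K * (A * Φr + ∑ k, uk k • (N k * Φr))ᵀ))
    - (A * (αr • Z' - Φr * K * Φrᵀ) + (αr • Z' - Φr * K * Φrᵀ) * Aᵀ
        + (∑ k, (γ * (if N k = 0 then (0:ℝ) else uk k))^2) • (αr • Z' - Φr * K * Φrᵀ))
    = (γ^2)⁻¹ • (∑ k, N k * (αr • Z' - Φr * K * Φrᵀ) * (N k)ᵀ)
      + ∑ k, (if N k = 0 then (0 : Matrix (Fin n) (Fin n) ℝ) else (γ * uk k) • 1 - γ⁻¹ • N k)
          * (Φr * K * Φrᵀ)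
          * (if N k = 0 then (0 : Matrix (Fin n) (Fin n) ℝ) else (γ * uk k) • 1 - γ⁻¹ • N k)ᵀ := by
  set P : Matrix (Fin n) (Fin n) ℝ := Φr * K * Φrᵀ with hP
  have hCkPC : ∀ k : Fin m,
      (if N k = 0 then (0 : Matrix (Fin n) (Fin n) ℝ) else (γ * uk k) • 1 - γ⁻¹ • N k) * P
        * (if N k = 0 then (0 : Matrix (Fin n) (Fin n) ℝ) else (γ * uk k) • 1 - γ⁻¹ • N k)ᵀ
      = (γ * (if N k = 0 then (0:ℝ) else uk k))^2 • P + (γ^2)⁻¹ • (N k * P * (N k)ᵀ)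
        - uk k • (N k * P) - uk k • (P * (N k)ᵀ) := by
    intro k
    by_cases h : N k = 0
    · simp [h]
    · simp only [h, if_false]
      rw [Matrix.transpose_sub, Matrix.transpose_smul, Matrix.transpose_smul,
        Matrix.transpose_one]
      simp only [Matrix.sub_mul, Matrix.mul_sub, smul_mul_assoc, mul_smul_comm,
        Matrix.one_mul, Matrix.mul_one, smul_smul, Matrix.mul_assoc]
      match_scalars <;> field_simp <;> ring
  have hsumCk : ∑ k, (if N k = 0 then (0 : Matrix (Fin n) (Fin n) ℝ) else (γ * uk k) • 1 - γ⁻¹ • N k) * P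
        * (if N k = 0 then (0 : Matrix (Fin n) (Fin n) ℝ) else (γ * uk k) • 1 - γ⁻¹ • N k)ᵀ
      = (∑ k, (γ * (if N k = 0 then (0:ℝ) else uk k))^2) • P
        + (γ^2)⁻¹ • (∑ k, N k * P * (N k)ᵀ)
        - (∑ k, uk k • (N k * P)) - (∑ k, uk k • (P * (N k)ᵀ)) := by
    rw [Finset.sum_congr rfl fun k _ => hCkPC k]
    rw [Finset.sum_sub_distrib, Finset.sum_sub_distrib, Finset.sum_add_distrib,
      Finset.sum_smul, Finset.smul_sum]
  have hΦdK : (A * Φr + ∑ k, uk k • (N k * Φr)) * K * Φrᵀ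
      = A * P + ∑ k, uk k • (N k * P) := by
    simp only [Matrix.add_mul, Finset.sum_mul, smul_mul_assoc, Matrix.mul_assoc, hP]
  have hKΦd : Φr * K * (A * Φr + ∑ k, uk k • (N k * Φr))ᵀ
      = P * Aᵀ + ∑ k, uk k • (P * (N k)ᵀ) := by
    simp only [Matrix.transpose_add, Matrix.transpose_sum, Matrix.transpose_mul,
      Matrix.transpose_smul, Matrix.mul_add, Finset.mul_sum, mul_smul_comm,
      Matrix.mul_assoc, hP]
  have hNE : ∑ k, N k * (αr • Z' - P) * (N k)ᵀ
      = αr • (∑ k, N k * Z' * (N k)ᵀ) - ∑ k, N k * P * (N k)ᵀ := by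
    rw [Finset.smul_sum, ← Finset.sum_sub_distrib]
    apply Finset.sum_congr rfl
    intro k _
    simp only [Matrix.mul_sub, Matrix.sub_mul, mul_smul_comm, smul_mul_assoc]
  rw [hsumCk, hΦdK, hKΦd, hNE]
  simp only [Matrix.mul_sub, Matrix.sub_mul, Matrix.mul_add, Matrix.add_mul,
    mul_smul_comm, smul_mul_assoc, smul_sub, smul_add, smul_smul]
  module

end StepB

attribute [local instance] Matrix.normedAddCommGroup Matrix.normedSpace

/-- Lemma 2.3: estimate for the fundamental solution `Φ` of the bilinear
system in terms of the solution `Z` of the generalized Lyapunov matrix differential equation: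
`Φ(t,s) K Φ(t,s)ᵀ ≤ exp{∫ₛᵗ ‖γ u⁰(v)‖₂² dv} · Z(t−s)` in the positive semidefinite order. -/
theorem fundamental_solution_estimate
    {n m : ℕ}
    (A : Matrix (Fin n) (Fin n) ℝ) (N : Fin m → Matrix (Fin n) (Fin n) ℝ)
    (u : ℝ → Fin m → ℝ) (hu : Continuous u)
    (γ : ℝ) (hγ : 0 < γ)
    (Φ : ℝ → ℝ → Matrix (Fin n) (Fin n) ℝ)
    (hΦinit : ∀ s, 0 ≤ s → Φ s s = 1)
    (hΦode : ∀ s, 0 ≤ s → ∀ t, s ≤ t →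
      HasDerivAt (fun τ => Φ τ s) (A * Φ t s + ∑ k, u t k • (N k * Φ t s)) t)
    (K : Matrix (Fin n) (Fin n) ℝ) (hK : K.PosSemidef)
    -- `Z = Z_γ(·, K)` solves the generalized Lyapunov matrix ODE with initial value `K`
    (Z : ℝ → Matrix (Fin n) (Fin n) ℝ)
    (hZ0 : Z 0 = K)
    (hZode : ∀ τ, 0 ≤ τ →
      HasDerivAt Z (A * Z τ + Z τ * Aᵀ + (γ ^ 2)⁻¹ • ∑ k, N k * Z τ * (N k)ᵀ) τ)
    (s t : ℝ) (hs : 0 ≤ s) (hst : s ≤ t) :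
    (Real.exp (∫ v in s..t, ∑ k, (γ * (if N k = 0 then (0 : ℝ) else u v k)) ^ 2) • Z (t - s)
      - Φ t s * K * (Φ t s)ᵀ).PosSemidef := by
  classical
  set c : ℝ := (γ ^ 2)⁻¹ with hcdef
  have hc0 : 0 ≤ c := by positivity
  set g : ℝ → ℝ := fun v => ∑ k, (γ * (if N k = 0 then (0 : ℝ) else u v k)) ^ 2 with hgdef
  have hgc : Continuous g := by
    apply continuous_finset_sum
    intro k _
    by_cases hNk : N k = 0
    · simp only [hNk, if_true, eq_self_iff_true]
      exact continuous_const
    · simp only [hNk, if_false]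
      exact ((continuous_const.mul ((continuous_apply k).comp hu))).pow 2
  have hg0 : ∀ v, 0 ≤ g v := fun v => Finset.sum_nonneg fun k _ => sq_nonneg _
  set ig : ℝ → ℝ := fun τ => ∫ v in s..τ, g v with higdef
  have hig : ∀ τ, HasDerivAt ig (g τ) τ := fun τ =>
    intervalIntegral.integral_hasDerivAt_right (hgc.intervalIntegrable _ _)
      (hgc.stronglyMeasurableAtFilter _ _) hgc.continuousAt
  set α : ℝ → ℝ := fun τ => Real.exp (ig τ) with hαdef
  set β : ℝ → ℝ := fun τ => Real.exp (-ig τ) with hβdef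
  have hα : ∀ τ, HasDerivAt α (g τ * α τ) τ := fun τ => by
    simpa [hαdef, mul_comm] using (hig τ).exp
  have hβ : ∀ τ, HasDerivAt β (-(g τ) * β τ) τ := fun τ => by
    simpa [hβdef, mul_comm] using ((hig τ).neg).exp
  set X : ℝ → Matrix (Fin n) (Fin n) ℝ := fun r => NormedSpace.exp ((s - r) • A) with hXdef
  set Y : ℝ → Matrix (Fin n) (Fin n) ℝ := fun r => NormedSpace.exp ((r - s) • A) with hYdef
  have hX : ∀ r, HasDerivAt X (-(X r * A)) r := by
    intro r
    rw [hasDerivAt_matrix]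
    intro i j
    have houter := expEntry_hasDerivAt A (s - r) i j
    have hinner : HasDerivAt (fun ρ : ℝ => s - ρ) (-1) r := by
      simpa using (hasDerivAt_id r).const_sub s
    have h := houter.comp r hinner
    have : HasDerivAt (fun ρ => X ρ i j)
        ((NormedSpace.exp ((s - r) • A) * A) i j * (-1)) r := h
    simpa [hXdef, Matrix.neg_apply] using this
  have hY : ∀ r, HasDerivAt Y (Y r * A) r := by
    intro r
    rw [hasDerivAt_matrix]
    intro i j
    have houter := expEntry_hasDerivAt A (r - s) i j
    have hinner : HasDerivAt (fun ρ : ℝ => ρ - s) 1 r := (hasDerivAt_id r).sub_const s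
    have h := houter.comp r hinner
    simp only [mul_one] at h
    exact h
  have hYX : ∀ r, Y r * X r = 1 := by
    intro r
    have hcomm : Commute ((r - s) • A) ((s - r) • A) :=
      ((Commute.refl A).smul_left _).smul_right _
    have h := (Matrix.exp_add_of_commute _ _ hcomm).symm
    have h2 : (r - s) • A + (s - r) • A = 0 := by
      rw [← add_smul]
      simp
    rw [hYdef, hXdef]
    simp only []
    rw [h, h2, NormedSpace.exp_zero]
  have hXY : ∀ r, X r * Y r = 1 := by
    intro r
    have hcomm : Commute ((s - r) • A) ((r - s) • A) :=
      ((Commute.refl A).smul_left _).smul_right _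
    have h := (Matrix.exp_add_of_commute _ _ hcomm).symm
    have h2 : (s - r) • A + (r - s) • A = 0 := by
      rw [← add_smul]
      simp
    rw [hYdef, hXdef]
    simp only []
    rw [h, h2, NormedSpace.exp_zero]
  set P : ℝ → Matrix (Fin n) (Fin n) ℝ := fun r => Φ r s * K * (Φ r s)ᵀ with hPdef
  set E : ℝ → Matrix (Fin n) (Fin n) ℝ := fun r => α r • Z (r - s) - P r with hEdef
  set C : ℝ → Matrix (Fin n) (Fin n) ℝ := fun r => β r • (X r * E r * (X r)ᵀ) with hCdef
  set Φd : ℝ → Matrix (Fin n) (Fin n) ℝ :=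
    fun r => A * Φ r s + ∑ k, u r k • (N k * Φ r s) with hΦddef
  set Zd : ℝ → Matrix (Fin n) (Fin n) ℝ :=
    fun r => A * Z (r - s) + Z (r - s) * Aᵀ + c • ∑ k, N k * Z (r - s) * (N k)ᵀ with hZddef
  set Ed : ℝ → Matrix (Fin n) (Fin n) ℝ := fun r =>
    (α r • Zd r + (g r * α r) • Z (r - s))
      - (Φd r * K * (Φ r s)ᵀ + Φ r s * K * (Φd r)ᵀ) with hEddef
  have hΦr : ∀ r, s ≤ r → HasDerivAt (fun τ => Φ τ s) (Φd r) r := fun r hr => hΦode s hs r hr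
  have hZr : ∀ r, s ≤ r → HasDerivAt (fun τ => Z (τ - s)) (Zd r) r := by
    intro r hr
    have h1 := hZode (r - s) (by linarith)
    have h2 : HasDerivAt (fun τ : ℝ => τ - s) 1 r := (hasDerivAt_id r).sub_const s
    rw [hasDerivAt_matrix]
    intro i j
    have h1e := hasDerivAt_matrix.1 h1 i j
    have h3 := h1e.comp r h2
    simp only [mul_one] at h3
    exact h3
  have hEr : ∀ r, s ≤ r → HasDerivAt E (Ed r) r := by
    intro r hr
    have h1 : HasDerivAt (fun τ => α τ • Z (τ - s))
        (α r • Zd r + (g r * α r) • Z (r - s)) r := (hα r).smul (hZr r hr)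
    have h2 : HasDerivAt (fun τ => Φ τ s * K) (Φd r * K) r := by
      simpa using (hΦr r hr).matmul (hasDerivAt_const r K)
    have h3 : HasDerivAt P (Φd r * K * (Φ r s)ᵀ + Φ r s * K * (Φd r)ᵀ) r :=
      h2.matmul (hΦr r hr).mtranspose
    exact h1.sub h3
  set Mk : Fin m → ℝ → Matrix (Fin n) (Fin n) ℝ := fun k r => X r * N k * Y r with hMkdef
  set Ck : Fin m → ℝ → Matrix (Fin n) (Fin n) ℝ := fun k r =>
    if N k = 0 then 0 else (γ * u r k) • (1 : Matrix (Fin n) (Fin n) ℝ) - γ⁻¹ • N k with hCkdef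
  set Fm : ℝ → Matrix (Fin n) (Fin n) ℝ := fun r => ∑ k, Ck k r * P r * (Ck k r)ᵀ with hFmdef
  set Cd : ℝ → Matrix (Fin n) (Fin n) ℝ := fun r =>
    c • (∑ k, Mk k r * C r * (Mk k r)ᵀ) + β r • (X r * Fm r * (X r)ᵀ) with hCddef
  -- the key derivative computation
  have hCr : ∀ r, s ≤ r → HasDerivAt C (Cd r) r := by
    intro r hr
    have hXEX : HasDerivAt (fun τ => X τ * E τ * (X τ)ᵀ)
        ((-(X r * A) * E r + X r * Ed r) * (X r)ᵀ + X r * E r * (-(X r * A))ᵀ) r :=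
      ((hX r).matmul (hEr r hr)).matmul (hX r).mtranspose
    have h0 : HasDerivAt C
        (β r • ((-(X r * A) * E r + X r * Ed r) * (X r)ᵀ + X r * E r * (-(X r * A))ᵀ)
          + (-(g r) * β r) • (X r * E r * (X r)ᵀ)) r := (hβ r).smul hXEX
    convert h0 using 1
    have h1 : ∀ M : Matrix (Fin n) (Fin n) ℝ, Y r * (X r * M) = M := by
      intro M
      rw [← Matrix.mul_assoc, hYX r, Matrix.one_mul]
    have h2 : ∀ M : Matrix (Fin n) (Fin n) ℝ, (X r)ᵀ * ((Y r)ᵀ * M) = M := by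
      intro M
      rw [← Matrix.mul_assoc, ← Matrix.transpose_mul, hYX r, Matrix.transpose_one,
        Matrix.one_mul]
    have hMkC : ∀ k : Fin m, Mk k r * C r * (Mk k r)ᵀ
        = β r • (X r * (N k * E r * (N k)ᵀ) * (X r)ᵀ) := by
      intro k
      have hMk' : Mk k r = X r * N k * Y r := rfl
      have hC' : C r = β r • (X r * E r * (X r)ᵀ) := rfl
      rw [hMk', hC', mul_smul_comm, smul_mul_assoc]
      congr 1
      rw [Matrix.transpose_mul, Matrix.transpose_mul]
      simp only [Matrix.mul_assoc]
      rw [h2, h1]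
    have hsum : ∑ k, Mk k r * C r * (Mk k r)ᵀ
        = β r • (X r * (∑ k, N k * E r * (N k)ᵀ) * (X r)ᵀ) := by
      rw [Finset.sum_congr rfl fun k _ => hMkC k, ← Finset.smul_sum]
      congr 1
      rw [Finset.mul_sum, Finset.sum_mul]
    have hEdid : Ed r - (A * E r + E r * Aᵀ + g r • E r)
        = c • (∑ k, N k * E r * (N k)ᵀ) + Fm r := by
      have hstepB := stepB_lemma A N γ hγ.ne' (u r) (Φ r s) K (Z (r - s)) (α r)
      simp only [hEddef, hEdef, hPdef, hFmdef, hCkdef, hZddef, hΦddef, hgdef, hcdef]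
      exact hstepB
    calc Cd r = c • (β r • (X r * (∑ k, N k * E r * (N k)ᵀ) * (X r)ᵀ))
          + β r • (X r * Fm r * (X r)ᵀ) := by
          rw [show Cd r = c • (∑ k, Mk k r * C r * (Mk k r)ᵀ)
            + β r • (X r * Fm r * (X r)ᵀ) from rfl, hsum]
    _ = β r • (X r * (c • (∑ k, N k * E r * (N k)ᵀ) + Fm r) * (X r)ᵀ) := by
        simp only [Matrix.mul_add, Matrix.add_mul, mul_smul_comm, smul_mul_assoc,
          smul_add, smul_smul]
        rw [mul_comm c (β r)]
    _ = β r • (X r * (Ed r - (A * E r + E r * Aᵀ + g r • E r)) * (X r)ᵀ) := by rw [hEdid]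
    _ = β r • ((-(X r * A) * E r + X r * Ed r) * (X r)ᵀ + X r * E r * (-(X r * A))ᵀ)
          + (-(g r) * β r) • (X r * E r * (X r)ᵀ) := by
        simp only [Matrix.mul_sub, Matrix.sub_mul, Matrix.mul_add, Matrix.add_mul,
          Matrix.transpose_neg, Matrix.transpose_mul, Matrix.neg_mul, Matrix.mul_neg,
          mul_smul_comm, smul_mul_assoc, smul_sub, smul_add, smul_smul, Matrix.mul_assoc]
        module
  -- continuity facts
  have hXc : Continuous X := continuous_iff_continuousAt.2 fun r => (hX r).continuousAt
  have hYc : Continuous Y := continuous_iff_continuousAt.2 fun r => (hY r).continuousAt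
  have hβc : Continuous β := continuous_iff_continuousAt.2 fun r => (hβ r).continuousAt
  have hCc : ContinuousOn C (Set.Icc s t) :=
    fun r hr => ((hCr r hr.1).continuousAt).continuousWithinAt
  have hΦc : ContinuousOn (fun r => Φ r s) (Set.Icc s t) :=
    fun r hr => ((hΦr r hr.1).continuousAt).continuousWithinAt
  have hPc : ContinuousOn P (Set.Icc s t) :=
    (hΦc.matmul' continuousOn_const).matmul' (continuous_id.matrix_transpose.comp_continuousOn hΦc)
  have hCkc : ∀ k, Continuous (fun r => Ck k r) := by
    intro k
    by_cases hNk : N k = 0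
    · simp only [hCkdef, hNk, if_true]
      exact continuous_const
    · simp only [hCkdef, hNk, if_false]
      exact ((continuous_const.mul ((continuous_apply k).comp hu)).smul
        continuous_const).sub continuous_const
  have hFmc : ContinuousOn Fm (Set.Icc s t) := by
    apply continuousOn_finset_sum
    intro k _
    exact ((hCkc k).continuousOn.matmul' hPc).matmul'
      (hCkc k).matrix_transpose.continuousOn
  have hCdc : ContinuousOn Cd (Set.Icc s t) := by
    have hMkc : ∀ k, Continuous (fun r => Mk k r) := fun k =>
      (hXc.matrix_mul continuous_const).matrix_mul hYc
    have h1 : ContinuousOn (fun r => ∑ k, Mk k r * C r * (Mk k r)ᵀ) (Set.Icc s t) := by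
      apply continuousOn_finset_sum
      intro k _
      exact ((hMkc k).continuousOn.matmul' hCc).matmul'
        (hMkc k).matrix_transpose.continuousOn
    have h3 : ContinuousOn (fun r => X r * Fm r * (X r)ᵀ) (Set.Icc s t) :=
      (hXc.continuousOn.matmul' hFmc).matmul' hXc.matrix_transpose.continuousOn
    exact (continuousOn_const.fun_smul h1).fun_add (hβc.continuousOn.fun_smul h3)
  -- C s = 0
  have hCs : C s = 0 := by
    have hα0 : α s = 1 := by simp [hαdef, higdef]
    have hE0 : E s = 0 := by
      simp [hEdef, hPdef, hα0, hΦinit s hs, sub_self, hZ0]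
    simp [hCdef, hE0]
  -- uniform bound on ‖Mk k r‖
  obtain ⟨B, hB0, hBnd⟩ : ∃ B : ℝ, 0 ≤ B ∧ ∀ r ∈ Set.Icc s t, ∀ k, ‖Mk k r‖ ≤ B := by
    set ρ : ℝ → ℝ := fun r => ∑ k, ‖Mk k r‖ with hρdef
    have hρc : ContinuousOn ρ (Set.Icc s t) := by
      apply continuousOn_finset_sum
      intro k _
      exact (((hXc.matrix_mul continuous_const).matrix_mul hYc).norm).continuousOn
    rcases (isCompact_Icc.bddAbove_image hρc) with ⟨B, hB⟩
    refine ⟨max B 0, le_max_right _ _, ?_⟩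
    intro r hr k
    have h1 : ‖Mk k r‖ ≤ ρ r := by
      apply Finset.single_le_sum (f := fun k => ‖Mk k r‖) (fun k _ => norm_nonneg _)
        (Finset.mem_univ k)
    have h2 : ρ r ≤ B := hB (Set.mem_image_of_mem ρ hr)
    calc ‖Mk k r‖ ≤ B := h1.trans h2
    _ ≤ max B 0 := le_max_left _ _
  -- pointwise bound on the derivative quadratic form
  set ψ : ℝ → ℝ := fun r => Psi (C r) with hψdef
  set KK : ℝ := c * m * ((n : ℝ) * B)^2 with hKKdef
  have hKK0 : 0 ≤ KK := by positivity
  have hbound : ∀ r ∈ Set.Icc s t, ∀ x ∈ Metric.closedBall (0 : Fin n → ℝ) 1,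
      -(x ⬝ᵥ (Cd r *ᵥ x)) ≤ KK * ψ r := by
    intro r hr x hx
    have hx1 : ‖x‖ ≤ 1 := by simpa using hx
    have h1 : x ⬝ᵥ (Cd r *ᵥ x)
        = c * (∑ k, ((Mk k r)ᵀ *ᵥ x) ⬝ᵥ (C r *ᵥ ((Mk k r)ᵀ *ᵥ x)))
          + β r * (((X r)ᵀ *ᵥ x) ⬝ᵥ (Fm r *ᵥ ((X r)ᵀ *ᵥ x))) := by
      simp only [hCddef]
      rw [Matrix.add_mulVec, Matrix.smul_mulVec, Matrix.smul_mulVec,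
        dotProduct_add, dotProduct_smul, dotProduct_smul, smul_eq_mul, smul_eq_mul]
      congr 1
      · congr 1
        rw [sum_mulVec', dotProduct_sum']
        exact Finset.sum_congr rfl fun k _ => qf_conj (Mk k r) (C r) x
      · congr 1
        exact qf_conj (X r) (Fm r) x
    have h2 : 0 ≤ ((X r)ᵀ *ᵥ x) ⬝ᵥ (Fm r *ᵥ ((X r)ᵀ *ᵥ x)) := by
      set z := (X r)ᵀ *ᵥ x with hzdef
      simp only [hFmdef]
      rw [sum_mulVec', dotProduct_sum']
      apply Finset.sum_nonneg
      intro k _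
      rw [qf_conj (Ck k r) (P r) z]
      set w := (Ck k r)ᵀ *ᵥ z with hwdef
      simp only [hPdef]
      rw [qf_conj (Φ r s) K w]
      have := hK.dotProduct_mulVec_nonneg ((Φ r s)ᵀ *ᵥ w)
      have hstar : star ((Φ r s)ᵀ *ᵥ w) = (Φ r s)ᵀ *ᵥ w := by
        funext i
        simp
      rwa [hstar] at this
    have h3 : ∀ k : Fin m, -(((Mk k r)ᵀ *ᵥ x) ⬝ᵥ (C r *ᵥ ((Mk k r)ᵀ *ᵥ x)))
        ≤ ((n : ℝ) * B)^2 * ψ r := by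
      intro k
      have hn := neg_qf_le_Psi (C r) ((Mk k r)ᵀ *ᵥ x)
      have hb := norm_transpose_mulVec_le (Mk k r) hx1
      have hMB := hBnd r hr k
      have hy : ‖(Mk k r)ᵀ *ᵥ x‖ ≤ (n : ℝ) * B := by
        calc ‖(Mk k r)ᵀ *ᵥ x‖ ≤ (n : ℝ) * ‖Mk k r‖ := hb
        _ ≤ (n : ℝ) * B := by
            apply mul_le_mul_of_nonneg_left hMB (by positivity)
      have hψr : 0 ≤ ψ r := Psi_nonneg _
      have hynn : 0 ≤ ‖(Mk k r)ᵀ *ᵥ x‖ := norm_nonneg _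
      calc -(((Mk k r)ᵀ *ᵥ x) ⬝ᵥ (C r *ᵥ ((Mk k r)ᵀ *ᵥ x)))
          ≤ ‖(Mk k r)ᵀ *ᵥ x‖^2 * Psi (C r) := hn
      _ ≤ ((n : ℝ) * B)^2 * ψ r := by
          apply mul_le_mul_of_nonneg_right _ hψr
          nlinarith
    have hβr : 0 < β r := Real.exp_pos _
    rw [h1]
    have h4 : -(c * (∑ k, ((Mk k r)ᵀ *ᵥ x) ⬝ᵥ (C r *ᵥ ((Mk k r)ᵀ *ᵥ x)))
          + β r * (((X r)ᵀ *ᵥ x) ⬝ᵥ (Fm r *ᵥ ((X r)ᵀ *ᵥ x))))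
        ≤ c * (∑ k : Fin m, -(((Mk k r)ᵀ *ᵥ x) ⬝ᵥ (C r *ᵥ ((Mk k r)ᵀ *ᵥ x)))) := by
      rw [Finset.sum_neg_distrib]
      have hβF := mul_nonneg hβr.le h2
      nlinarith
    calc -(c * (∑ k, ((Mk k r)ᵀ *ᵥ x) ⬝ᵥ (C r *ᵥ ((Mk k r)ᵀ *ᵥ x)))
          + β r * (((X r)ᵀ *ᵥ x) ⬝ᵥ (Fm r *ᵥ ((X r)ᵀ *ᵥ x)))) ≤ _ := h4
    _ ≤ c * (∑ k : Fin m, ((n : ℝ) * B)^2 * ψ r) := by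
        apply mul_le_mul_of_nonneg_left _ hc0
        exact Finset.sum_le_sum fun k _ => h3 k
    _ = KK * ψ r := by
        rw [Finset.sum_const, Finset.card_univ, Fintype.card_fin]
        simp only [hKKdef, nsmul_eq_mul]
        ring
  -- ψ is continuous
  have hψc : ContinuousOn ψ (Set.Icc s t) := Psi_lipschitz.continuous.comp_continuousOn hCc
  have hψ0 : ∀ r, 0 ≤ ψ r := fun r => Psi_nonneg _
  -- integral equation and Gronwall inequality
  have hint : ∀ τ ∈ Set.Icc s t, ∀ x ∈ Metric.closedBall (0 : Fin n → ℝ) 1,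
      x ⬝ᵥ (C τ *ᵥ x) = ∫ r in s..τ, x ⬝ᵥ (Cd r *ᵥ x) := by
    intro τ hτ x hx
    have h1 : ∀ r ∈ Set.uIcc s τ, HasDerivAt (fun ρ => x ⬝ᵥ (C ρ *ᵥ x)) (x ⬝ᵥ (Cd r *ᵥ x)) r := by
      intro r hr
      rw [Set.uIcc_of_le hτ.1] at hr
      exact (hCr r hr.1).qf x
    have h2 : IntervalIntegrable (fun r => x ⬝ᵥ (Cd r *ᵥ x)) volume s τ := by
      apply ContinuousOn.intervalIntegrable
      apply (continuous_qf x).comp_continuousOn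
      apply hCdc.mono
      rw [Set.uIcc_of_le hτ.1]
      exact Set.Icc_subset_Icc le_rfl hτ.2
    have h3 := intervalIntegral.integral_eq_sub_of_hasDerivAt h1 h2
    rw [h3, hCs]
    simp
  have hgron : ∀ τ ∈ Set.Icc s t, ψ τ ≤ KK * ∫ r in s..τ, ψ r := by
    intro τ hτ
    apply ciSup_le
    intro x
    have h1 := hint τ hτ x.1 x.2
    have hψint : IntervalIntegrable ψ volume s τ := by
      apply ContinuousOn.intervalIntegrable
      apply hψc.mono
      rw [Set.uIcc_of_le hτ.1]
      exact Set.Icc_subset_Icc le_rfl hτ.2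
    have hqint : IntervalIntegrable (fun r => x.1 ⬝ᵥ (Cd r *ᵥ x.1)) volume s τ := by
      apply ContinuousOn.intervalIntegrable
      apply (continuous_qf x.1).comp_continuousOn
      apply hCdc.mono
      rw [Set.uIcc_of_le hτ.1]
      exact Set.Icc_subset_Icc le_rfl hτ.2
    calc -(x.1 ⬝ᵥ (C τ *ᵥ x.1)) = ∫ r in s..τ, -(x.1 ⬝ᵥ (Cd r *ᵥ x.1)) := by
          rw [h1, intervalIntegral.integral_neg]
    _ ≤ ∫ r in s..τ, KK * ψ r := by
          apply intervalIntegral.integral_mono_on hτ.1 hqint.neg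
            (hψint.const_mul KK)
          intro r hr
          exact hbound r ⟨hr.1, hr.2.trans hτ.2⟩ x.1 x.2
    _ = KK * ∫ r in s..τ, ψ r := by rw [intervalIntegral.integral_const_mul]
  have hzero := gronwall_zero hst hKK0 hψc hgron
  -- positivity of the quadratic form of C t
  have hCt : ∀ x : Fin n → ℝ, 0 ≤ x ⬝ᵥ (C t *ᵥ x) := by
    intro x
    have h1 := neg_qf_le_Psi (C t) x
    have h2 : ψ t ≤ 0 := hzero t (Set.right_mem_Icc.2 hst)
    have h3 : ‖x‖^2 * Psi (C t) ≤ 0 :=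
      mul_nonpos_of_nonneg_of_nonpos (by positivity) h2
    linarith
  -- transfer to E t
  have hEt : ∀ x : Fin n → ℝ, 0 ≤ x ⬝ᵥ (E t *ᵥ x) := by
    intro x
    have hXtYt : (X t)ᵀ * (Y t)ᵀ = 1 := by
      rw [← Matrix.transpose_mul, hYX t, Matrix.transpose_one]
    have hYCY : Y t * C t * (Y t)ᵀ = β t • E t := by
      have hCt' : C t = β t • (X t * E t * (X t)ᵀ) := rfl
      rw [hCt', mul_smul_comm, smul_mul_assoc]
      congr 1
      calc Y t * (X t * E t * (X t)ᵀ) * (Y t)ᵀ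
          = (Y t * X t) * E t * ((X t)ᵀ * (Y t)ᵀ) := by
            simp only [Matrix.mul_assoc]
      _ = E t := by rw [hYX t, hXtYt, Matrix.one_mul, Matrix.mul_one]
    have h4 : x ⬝ᵥ ((Y t * C t * (Y t)ᵀ) *ᵥ x) = ((Y t)ᵀ *ᵥ x) ⬝ᵥ (C t *ᵥ ((Y t)ᵀ *ᵥ x)) :=
      qf_conj (Y t) (C t) x
    have h5 : 0 ≤ x ⬝ᵥ ((β t • E t) *ᵥ x) := by
      rw [← hYCY, h4]
      exact hCt _
    have h6 : x ⬝ᵥ ((β t • E t) *ᵥ x) = β t * (x ⬝ᵥ (E t *ᵥ x)) := by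
      simp [Matrix.smul_mulVec, dotProduct_smul]
    rw [h6] at h5
    have hβpos : 0 < β t := Real.exp_pos _
    nlinarith
  -- assemble PosSemidef
  have hgoal_eq : Real.exp (∫ v in s..t, ∑ k, (γ * (if N k = 0 then (0 : ℝ) else u v k)) ^ 2)
      • Z (t - s) - Φ t s * K * (Φ t s)ᵀ = E t := rfl
  rw [hgoal_eq]
  refine Matrix.PosSemidef.of_dotProduct_mulVec_nonneg ?_ ?_
  · -- Hermitian
    have hZsymm : (Z (t - s))ᵀ = Z (t - s) := by
      apply Z_symm A N γ K _ Z hZ0 hZode (t - s) (by linarith)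
      rw [← Matrix.conjTranspose_eq_transpose_of_trivial]
      exact hK.1
    have hKsymm : Kᵀ = K := by
      rw [← Matrix.conjTranspose_eq_transpose_of_trivial]
      exact hK.1
    rw [Matrix.IsHermitian, Matrix.conjTranspose_eq_transpose_of_trivial]
    simp only [hEdef, hPdef, Matrix.transpose_sub, Matrix.transpose_smul, hZsymm,
      Matrix.transpose_mul, Matrix.transpose_transpose, hKsymm, Matrix.mul_assoc]
  · intro x
    have hstar : star x = x := by
      funext i
      simp
    rw [hstar]
    exact hEt x
end

section
/- Let A, N_1, …, N_m ∈ ℝ^{n×n}, X₀ ∈ ℝ^{n×q}, v₀ ∈ ℝ^q, γ > 0 with every eigenvalue of I ⊗ A + A ⊗ I + γ^{-2} Σ_{k=1}^m N_k ⊗ N_k having strictly negative real part, let u ∈ L² be a continuous control, and let x_{x₀} solve the homogeneous bilinear system ẋ(t) = A x(t) + Σ_{k=1}^m N_k x(t) u_k(t), x(0) = X₀ v₀. Set P₀ := ∫₀^∞ Z_γ(s, X₀X₀^⊤) ds, and let p be a unit eigenvector of P₀ with eigenvalue λ ≥ 0. Then (∫₀^∞ ⟨x_{x₀}(t), p⟩²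 dt)^{1/2} ≤ λ^{1/2} · exp{0.5 ‖γ u⁰‖_{L²}²} · ‖v₀‖₂. -/
open MeasureTheory Matrix
open scoped Kronecker Classical

set_option linter.unusedVariables false

attribute [local instance] Matrix.normedAddCommGroup Matrix.normedSpace

set_option maxHeartbeats 1000000
open Set


lemma cross_zero {a b : ℝ} (ha : 0 ≤ a) (h : ∀ s : ℝ, 0 ≤ s * b + s ^ 2 * a) : b = 0 := by
  have h2 : (0:ℝ) < 2 * a + 1 := by linarith
  have h1 := h (-(b / (2 * a + 1)))
  have key : 0 ≤ (-(b / (2 * a + 1)) * b + (-(b / (2 * a + 1))) ^ 2 * a) * (2 * a + 1) ^ 2 :=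
    mul_nonneg h1 (sq_nonneg _)
  have expand : (-(b / (2 * a + 1)) * b + (-(b / (2 * a + 1))) ^ 2 * a) * (2 * a + 1) ^ 2
      = -(b ^ 2) * (a + 1) := by
    field_simp
    ring
  rw [expand] at key
  nlinarith [sq_nonneg b]

namespace BLT
variable {n : ℕ}

/-- generic quadratic form used in both applications -/
noncomputable def Fq (α β : ℝ) (M : Matrix (Fin n) (Fin n) ℝ) (y : Fin n → ℝ)
    (v : Fin n → ℝ) : ℝ :=
  α * (v ⬝ᵥ M.mulVec v) + β * (∑ i, v i ^ 2) - (y ⬝ᵥ v) ^ 2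

noncomputable def crossFq (α β : ℝ) (M : Matrix (Fin n) (Fin n) ℝ) (y : Fin n → ℝ)
    (w v : Fin n → ℝ) : ℝ :=
  α * (w ⬝ᵥ M.mulVec v + v ⬝ᵥ M.mulVec w) + 2 * β * (w ⬝ᵥ v) - 2 * (y ⬝ᵥ w) * (y ⬝ᵥ v)

lemma sum_sq_add_smul (w v : Fin n → ℝ) (s : ℝ) :
    (∑ i, (w + s • v) i ^ 2) = (∑ i, w i ^ 2) + s * (2 * (w ⬝ᵥ v)) + s ^ 2 * ∑ i, v i ^ 2 := by
  simp only [Pi.add_apply, Pi.smul_apply, smul_eq_mul, dotProduct]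
  have h : ∀ i : Fin n, (w i + s * v i) ^ 2
      = w i ^ 2 + s * (2 * (w i * v i)) + s ^ 2 * v i ^ 2 := fun i => by ring
  rw [Finset.sum_congr rfl (fun i _ => h i), Finset.sum_add_distrib, Finset.sum_add_distrib,
    ← Finset.mul_sum, ← Finset.mul_sum, ← Finset.mul_sum]

lemma Fq_expand (α β : ℝ) (M : Matrix (Fin n) (Fin n) ℝ) (y : Fin n → ℝ) (w v : Fin n → ℝ)
    (s : ℝ) :
    Fq α β M y (w + s • v)
      = Fq α β M y w + s * crossFq α β M y w v + s ^ 2 * Fq α β M y v := by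
  unfold Fq crossFq
  rw [sum_sq_add_smul]
  simp only [Matrix.mulVec_add, Matrix.mulVec_smul, dotProduct_add, add_dotProduct,
    dotProduct_smul, smul_dotProduct, smul_eq_mul]
  ring

lemma Fq_smul (α β : ℝ) (M : Matrix (Fin n) (Fin n) ℝ) (y : Fin n → ℝ) (v : Fin n → ℝ) (s : ℝ) :
    Fq α β M y (s • v) = s ^ 2 * Fq α β M y v := by
  unfold Fq
  have h1 : (∑ i, (s • v) i ^ 2) = s ^ 2 * ∑ i, v i ^ 2 := by
    simp only [Pi.smul_apply, smul_eq_mul, mul_pow, ← Finset.mul_sum]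
  simp only [Matrix.mulVec_smul, dotProduct_smul, smul_dotProduct, smul_eq_mul, h1]
  ring

lemma Fq_nonneg (α β : ℝ) (M : Matrix (Fin n) (Fin n) ℝ) (y : Fin n → ℝ)
    (h : ∀ v : Fin n → ℝ, (∑ i, v i ^ 2 = 1) → 0 ≤ Fq α β M y v) :
    ∀ v, 0 ≤ Fq α β M y v := by
  intro v
  by_cases hv : v = 0
  · subst hv
    unfold Fq
    simp
  · have hQ : 0 < ∑ i, v i ^ 2 := by
      have : ∃ i, v i ≠ 0 := by
        by_contra hc
        push_neg at hc
        exact hv (funext hc)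
      obtain ⟨i, hi⟩ := this
      exact Finset.sum_pos' (fun j _ => sq_nonneg _) ⟨i, Finset.mem_univ i, by positivity⟩
    set s := Real.sqrt (∑ i, v i ^ 2) with hs
    have hspos : 0 < s := Real.sqrt_pos.mpr hQ
    have hunit : ∑ i, (s⁻¹ • v) i ^ 2 = 1 := by
      simp only [Pi.smul_apply, smul_eq_mul, mul_pow, ← Finset.mul_sum]
      rw [hs]
      rw [inv_pow, Real.sq_sqrt (le_of_lt hQ)]
      field_simp
    have h1 : 0 ≤ Fq α β M y (s⁻¹ • v) := h _ hunit
    have h2 : Fq α β M y v = s ^ 2 * Fq α β M y (s⁻¹ • v) := by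
      rw [← Fq_smul]
      congr 1
      rw [smul_smul]
      rw [mul_inv_cancel₀ (ne_of_gt hspos), one_smul]
    rw [h2]
    positivity

lemma crossFq_zero (α β : ℝ) (M : Matrix (Fin n) (Fin n) ℝ) (y : Fin n → ℝ) (w : Fin n → ℝ)
    (hF : ∀ v, 0 ≤ Fq α β M y v) (hFw : Fq α β M y w = 0) :
    ∀ v, crossFq α β M y w v = 0 := by
  intro v
  apply cross_zero (hF v)
  intro s
  have := hF (w + s • v)
  rw [Fq_expand, hFw] at this
  linarith



variable {n : ℕ}

noncomputable def qfCLM (w : Fin n → ℝ) : Matrix (Fin n) (Fin n) ℝ →L[ℝ] ℝ :=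
  LinearMap.toContinuousLinearMap
    { toFun := fun M => w ⬝ᵥ M.mulVec w
      map_add' := fun M M' => by simp [Matrix.add_mulVec, dotProduct_add]
      map_smul' := fun c M => by simp [Matrix.smul_mulVec, dotProduct_smul] }

@[simp] lemma qfCLM_apply (w : Fin n → ℝ) (M : Matrix (Fin n) (Fin n) ℝ) :
    qfCLM w M = w ⬝ᵥ M.mulVec w := rfl

noncomputable def dotCLM (w : Fin n → ℝ) : (Fin n → ℝ) →L[ℝ] ℝ :=
  LinearMap.toContinuousLinearMap
    { toFun := fun v => v ⬝ᵥ w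
      map_add' := fun a b => by simp [add_dotProduct]
      map_smul' := fun c a => by simp [smul_dotProduct] }

@[simp] lemma dotCLM_apply (w v : Fin n → ℝ) : dotCLM w v = v ⬝ᵥ w := rfl

lemma hasDerivAt_qf {Z : ℝ → Matrix (Fin n) (Fin n) ℝ} {Z' : Matrix (Fin n) (Fin n) ℝ} {t : ℝ}
    (h : HasDerivAt Z Z' t) (w : Fin n → ℝ) :
    HasDerivAt (fun s => w ⬝ᵥ (Z s).mulVec w) (w ⬝ᵥ Z'.mulVec w) t :=
  (qfCLM w).hasFDerivAt.comp_hasDerivAt t h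

lemma hasDerivAt_dot {x : ℝ → Fin n → ℝ} {x' : Fin n → ℝ} {t : ℝ}
    (h : HasDerivAt x x' t) (w : Fin n → ℝ) :
    HasDerivAt (fun s => x s ⬝ᵥ w) (x' ⬝ᵥ w) t :=
  (dotCLM w).hasFDerivAt.comp_hasDerivAt t h

lemma continuousOn_entry {Z : ℝ → Matrix (Fin n) (Fin n) ℝ} {s : Set ℝ}
    (h : ContinuousOn Z s) (i j : Fin n) : ContinuousOn (fun t => Z t i j) s := by
  have e : Continuous (fun M : Matrix (Fin n) (Fin n) ℝ => M i j) := by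
    have : (fun M : Matrix (Fin n) (Fin n) ℝ => M i j)
        = (fun f : Fin n → ℝ => f j) ∘ (fun M : Matrix (Fin n) (Fin n) ℝ => M i) := rfl
    rw [this]
    exact (continuous_apply j).comp (continuous_apply i)
  exact e.comp_continuousOn h

-- rewriting identities
lemma dot_mul_left (A M : Matrix (Fin n) (Fin n) ℝ) (w : Fin n → ℝ) :
    w ⬝ᵥ (A * M).mulVec w = (Aᵀ.mulVec w) ⬝ᵥ M.mulVec w := by
  rw [← Matrix.mulVec_mulVec, Matrix.dotProduct_mulVec w A, ← Matrix.mulVec_transpose]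

lemma dot_mul_right (A M : Matrix (Fin n) (Fin n) ℝ) (w : Fin n → ℝ) :
    w ⬝ᵥ (M * Aᵀ).mulVec w = w ⬝ᵥ M.mulVec (Aᵀ.mulVec w) := by
  rw [← Matrix.mulVec_mulVec]

lemma dot_conj (Nk M : Matrix (Fin n) (Fin n) ℝ) (w : Fin n → ℝ) :
    w ⬝ᵥ (Nk * M * Nkᵀ).mulVec w = (Nkᵀ.mulVec w) ⬝ᵥ M.mulVec (Nkᵀ.mulVec w) := by
  rw [show Nk * M * Nkᵀ = Nk * (M * Nkᵀ) by rw [mul_assoc], ← Matrix.mulVec_mulVec,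
    Matrix.dotProduct_mulVec w Nk, ← Matrix.mulVec_transpose, ← Matrix.mulVec_mulVec]

lemma dot_self_conj (Nk : Matrix (Fin n) (Fin n) ℝ) (w : Fin n → ℝ) :
    (Nkᵀ.mulVec w) ⬝ᵥ (Nkᵀ.mulVec w) = w ⬝ᵥ (Nk * Nkᵀ).mulVec w := by
  rw [← Matrix.mulVec_mulVec, Matrix.dotProduct_mulVec w Nk, ← Matrix.mulVec_transpose]




lemma abs_le_one_of_unit {n : ℕ} {w : Fin n → ℝ} (hw : ∑ i, w i ^ 2 = 1) (i : Fin n) :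
    |w i| ≤ 1 := by
  have h1 : w i ^ 2 ≤ 1 := by
    rw [← hw]
    exact Finset.single_le_sum (f := fun j => w j ^ 2) (fun j _ => sq_nonneg _) (Finset.mem_univ i)
  nlinarith [abs_nonneg (w i), sq_abs (w i)]

/-- entrywise abs sum -/
noncomputable def entrySum {n : ℕ} (M : Matrix (Fin n) (Fin n) ℝ) : ℝ := ∑ i, ∑ j, |M i j|

lemma entrySum_nonneg {n : ℕ} (M : Matrix (Fin n) (Fin n) ℝ) : 0 ≤ entrySum M :=
  Finset.sum_nonneg fun _ _ => Finset.sum_nonneg fun _ _ => abs_nonneg _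

lemma abs_dot_mulVec_le {n : ℕ} {w v : Fin n → ℝ} (hw : ∀ i, |w i| ≤ 1) (hv : ∀ i, |v i| ≤ 1)
    (M : Matrix (Fin n) (Fin n) ℝ) : |w ⬝ᵥ M.mulVec v| ≤ entrySum M := by
  have : w ⬝ᵥ M.mulVec v = ∑ i, ∑ j, w i * M i j * v j := by
    simp [dotProduct, Matrix.mulVec, Finset.mul_sum, mul_assoc]
  rw [this]
  calc |∑ i, ∑ j, w i * M i j * v j| ≤ ∑ i, |∑ j, w i * M i j * v j| := Finset.abs_sum_le_sum_abs _ _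
    _ ≤ ∑ i, ∑ j, |w i * M i j * v j| :=
        Finset.sum_le_sum fun i _ => Finset.abs_sum_le_sum_abs _ _
    _ ≤ ∑ i, ∑ j, |M i j| := by
        refine Finset.sum_le_sum fun i _ => Finset.sum_le_sum fun j _ => ?_
        rw [abs_mul, abs_mul]
        calc |w i| * |M i j| * |v j| ≤ 1 * |M i j| * 1 := by
              apply mul_le_mul (mul_le_mul (hw i) le_rfl (abs_nonneg _) (by linarith [hw i, abs_nonneg (w i)])) (hv j) (abs_nonneg _)
              positivity
          _ = |M i j| := by ring



lemma positivity_lemma {n : ℕ} (q q' : ℝ → (Fin n → ℝ) → ℝ) (T : ℝ)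
    (hcont : ContinuousOn (fun tw : ℝ × (Fin n → ℝ) => q tw.1 tw.2)
      (Set.Icc 0 T ×ˢ {w : Fin n → ℝ | ∑ i, w i ^ 2 = 1}))
    (hderiv : ∀ t ∈ Set.Icc (0:ℝ) T, ∀ w : Fin n → ℝ, (∑ i, w i ^ 2 = 1) →
      HasDerivAt (fun s => q s w) (q' t w) t)
    (h0 : ∀ w : Fin n → ℝ, (∑ i, w i ^ 2 = 1) → 0 < q 0 w)
    (hcross : ∀ t ∈ Set.Icc (0:ℝ) T, ∀ w : Fin n → ℝ, (∑ i, w i ^ 2 = 1) →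
      (∀ v : Fin n → ℝ, (∑ i, v i ^ 2 = 1) → 0 ≤ q t v) → q t w = 0 → 0 < q' t w) :
    ∀ t ∈ Set.Icc (0:ℝ) T, ∀ w : Fin n → ℝ, (∑ i, w i ^ 2 = 1) → 0 ≤ q t w := by
  classical
  set SP : Set (Fin n → ℝ) := {w | ∑ i, w i ^ 2 = 1} with hSP
  have hSPclosed : IsClosed SP := by
    have : Continuous fun w : Fin n → ℝ => ∑ i, w i ^ 2 := by continuity
    exact isClosed_eq this continuous_const
  have hSPsub : SP ⊆ Metric.closedBall 0 1 := by
    intro w hw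
    rw [Metric.mem_closedBall, dist_zero_right]
    rw [pi_norm_le_iff_of_nonneg zero_le_one]
    intro i
    have h1 : w i ^ 2 ≤ 1 := by
      rw [← hw]
      exact Finset.single_le_sum (f := fun j => w j ^ 2) (fun j _ => sq_nonneg _)
        (Finset.mem_univ i)
    rw [Real.norm_eq_abs]
    have := abs_nonneg (w i)
    nlinarith [sq_abs (w i)]
  have hSPcompact : IsCompact SP :=
    (isCompact_closedBall 0 1).of_isClosed_subset hSPclosed hSPsub
  have hC0 : IsCompact (Set.Icc 0 T ×ˢ SP) := isCompact_Icc.prod hSPcompact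
  set K : Set (ℝ × (Fin n → ℝ)) :=
    (Set.Icc 0 T ×ˢ SP) ∩ (fun tw : ℝ × (Fin n → ℝ) => q tw.1 tw.2) ⁻¹' (Set.Iic 0) with hK
  have hKclosed : IsClosed K := hcont.preimage_isClosed_of_isClosed
    (hC0.isClosed) isClosed_Iic
  have hKcompact : IsCompact K := hC0.of_isClosed_subset hKclosed Set.inter_subset_left
  by_contra hcon
  push_neg at hcon
  obtain ⟨t₀, ht₀, w₀, hw₀, hq₀⟩ := hcon
  have hKne : K.Nonempty := ⟨(t₀, w₀), ⟨⟨ht₀, hw₀⟩, le_of_lt hq₀⟩⟩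
  obtain ⟨⟨ts, ws⟩, hmemK, hmin⟩ := hKcompact.exists_isMinOn hKne continuous_fst.continuousOn
  obtain ⟨⟨hts, hws⟩, hqle⟩ := hmemK
  have hqle : q ts ws ≤ 0 := hqle
  -- before ts, q is positive on the sphere
  have hbefore : ∀ t ∈ Set.Ico (0:ℝ) ts, ∀ v ∈ SP, 0 < q t v := by
    intro t ht v hv
    by_contra hle
    push_neg at hle
    have : (t, v) ∈ K := ⟨⟨⟨ht.1, le_trans (le_of_lt ht.2) hts.2⟩, hv⟩, hle⟩
    have := hmin this
    simp only at this
    exact absurd this (not_le.mpr ht.2)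
  have htspos : 0 < ts := by
    rcases lt_or_eq_of_le hts.1 with h | h
    · exact h
    · exfalso; exact absurd hqle (not_le.mpr (h ▸ h0 ws hws))
  -- at ts, q is nonneg on the sphere (by left limits)
  have hnbLeft : Filter.NeBot (nhdsWithin ts (Set.Ioo 0 ts)) := by
    have : ts ∈ closure (Set.Ioo 0 ts) := by
      rw [closure_Ioo (ne_of_lt htspos)]
      exact ⟨le_of_lt htspos, le_rfl⟩
    exact mem_closure_iff_nhdsWithin_neBot.mp this
  have hnn : ∀ v ∈ SP, 0 ≤ q ts v := by
    intro v hv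
    have hcv : ContinuousWithinAt (fun t => q t v) (Set.Icc 0 T) ts := by
      have := hcont.comp (f := fun t : ℝ => (t, v)) (continuous_id.prodMk continuous_const).continuousOn
        (fun t (ht : t ∈ Set.Icc 0 T) => Set.mk_mem_prod ht hv)
      exact this ts hts
    have htend : Filter.Tendsto (fun t => q t v) (nhdsWithin ts (Set.Ioo 0 ts)) (nhds (q ts v)) :=
      hcv.mono_left (nhdsWithin_mono ts (fun t ht =>
        ⟨le_of_lt ht.1, le_trans (le_of_lt ht.2) hts.2⟩))
    refine ge_of_tendsto htend ?_
    filter_upwards [self_mem_nhdsWithin] with t ht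
    exact le_of_lt (hbefore t ⟨le_of_lt ht.1, ht.2⟩ v hv)
  have hqz : q ts ws = 0 := le_antisymm hqle (hnn ws hws)
  have hd : 0 < q' ts ws := hcross ts hts ws hws (fun v hv => hnn v hv) hqz
  -- derivative contradiction
  have hder := hderiv ts hts ws hws
  rw [hasDerivAt_iff_tendsto_slope] at hder
  have hder' : Filter.Tendsto (slope (fun s => q s ws) ts) (nhdsWithin ts (Set.Ioo 0 ts))
      (nhds (q' ts ws)) :=
    hder.mono_left (nhdsWithin_mono ts (fun t ht => ne_of_lt ht.2))
  have hev : ∀ᶠ t in nhdsWithin ts (Set.Ioo 0 ts), 0 < slope (fun s => q s ws) ts t :=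
    hder'.eventually (eventually_gt_nhds hd)
  obtain ⟨t, hslope, ht⟩ := (hev.and self_mem_nhdsWithin).exists
  rw [slope_def_field] at hslope
  have h1 : q t ws > 0 := hbefore t ⟨le_of_lt ht.1, ht.2⟩ ws hws
  have h2 : t - ts < 0 := by linarith [ht.2]
  rw [div_pos_iff] at hslope
  rcases hslope with ⟨ha, hb⟩ | ⟨ha, hb⟩
  · linarith
  · rw [hqz] at ha; linarith

end BLT

namespace BLT

lemma Z_psd {n m : ℕ} (A : Matrix (Fin n) (Fin n) ℝ) (N : Fin m → Matrix (Fin n) (Fin n) ℝ)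
    (γ : ℝ) (hγ : 0 < γ) (Z : ℝ → Matrix (Fin n) (Fin n) ℝ)
    (hZ0 : ∀ w : Fin n → ℝ, 0 ≤ w ⬝ᵥ (Z 0).mulVec w)
    (hZode : ∀ t, 0 ≤ t →
      HasDerivAt Z (A * Z t + Z t * Aᵀ + (γ ^ 2)⁻¹ • ∑ k, N k * Z t * (N k)ᵀ) t) :
    ∀ t, 0 ≤ t → ∀ w : Fin n → ℝ, (∑ i, w i ^ 2 = 1) → 0 ≤ w ⬝ᵥ (Z t).mulVec w := by
  intro T hT w₀ hw₀
  set C : ℝ := 1 + 2 * entrySum Aᵀ + (γ ^ 2)⁻¹ * ∑ k, entrySum (N k * (N k)ᵀ) with hC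
  -- for every ε > 0 we get nonnegativity of the perturbed form
  have key : ∀ ε : ℝ, 0 < ε →
      0 ≤ w₀ ⬝ᵥ (Z T).mulVec w₀ + ε * Real.exp (C * T) * ∑ i, w₀ i ^ 2 := by
    intro ε hε
    set q : ℝ → (Fin n → ℝ) → ℝ :=
      fun t w => w ⬝ᵥ (Z t).mulVec w + ε * Real.exp (C * t) * ∑ i, w i ^ 2 with hq
    set q' : ℝ → (Fin n → ℝ) → ℝ :=
      fun t w => w ⬝ᵥ ((A * Z t + Z t * Aᵀ + (γ ^ 2)⁻¹ • ∑ k, N k * Z t * (N k)ᵀ).mulVec w)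
        + ε * (Real.exp (C * t) * C) * ∑ i, w i ^ 2 with hq'
    have hZcont : ContinuousOn Z (Set.Icc 0 T) := fun t ht =>
      (hZode t ht.1).continuousAt.continuousWithinAt
    have hqc : ContinuousOn (fun tw : ℝ × (Fin n → ℝ) => q tw.1 tw.2)
        (Set.Icc 0 T ×ˢ {w : Fin n → ℝ | ∑ i, w i ^ 2 = 1}) := by
      apply ContinuousOn.add
      · have hrw : (fun tw : ℝ × (Fin n → ℝ) => tw.2 ⬝ᵥ (Z tw.1).mulVec tw.2)
            = fun tw : ℝ × (Fin n → ℝ) => ∑ i, ∑ j, tw.2 i * Z tw.1 i j * tw.2 j := by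
          funext tw
          simp [dotProduct, Matrix.mulVec, Finset.mul_sum, mul_assoc]
        show ContinuousOn (fun tw : ℝ × (Fin n → ℝ) => tw.2 ⬝ᵥ (Z tw.1).mulVec tw.2) _
        rw [hrw]
        apply continuousOn_finset_sum
        intro i _
        apply continuousOn_finset_sum
        intro j _
        have h2 : ContinuousOn (fun tw : ℝ × (Fin n → ℝ) => Z tw.1 i j)
            (Set.Icc 0 T ×ˢ {w : Fin n → ℝ | ∑ i, w i ^ 2 = 1}) := by
          apply (continuousOn_entry hZcont i j).comp continuous_fst.continuousOn
          intro tw htw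
          exact htw.1
        exact ((((continuous_apply i).comp continuous_snd).continuousOn.mul h2).mul
          ((continuous_apply j).comp continuous_snd).continuousOn)
      · exact (((continuous_const.mul ((continuous_const.mul continuous_fst).rexp)).mul
          (continuous_finset_sum _ fun i _ =>
            ((continuous_apply i).comp continuous_snd).pow 2))).continuousOn
    have hqd : ∀ t ∈ Set.Icc (0:ℝ) T, ∀ w : Fin n → ℝ, (∑ i, w i ^ 2 = 1) →
        HasDerivAt (fun s => q s w) (q' t w) t := by
      intro t ht w hw
      have h1 := hasDerivAt_qf (hZode t ht.1) w
      have hlin : HasDerivAt (fun s : ℝ => C * s) C t := by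
        simpa only [mul_one] using (hasDerivAt_id' t).const_mul C
      have h2 := ((hlin.exp.const_mul ε).mul_const (∑ i, w i ^ 2))
      exact h1.add h2
    have hq0 : ∀ w : Fin n → ℝ, (∑ i, w i ^ 2 = 1) → 0 < q 0 w := by
      intro w hw
      have := hZ0 w
      have hexp : Real.exp (C * 0) = 1 := by simp
      simp only [hq, hexp, hw]
      nlinarith
    have hqcross : ∀ t ∈ Set.Icc (0:ℝ) T, ∀ w : Fin n → ℝ, (∑ i, w i ^ 2 = 1) →
        (∀ v : Fin n → ℝ, (∑ i, v i ^ 2 = 1) → 0 ≤ q t v) → q t w = 0 → 0 < q' t w := by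
      intro t ht w hw H0 Hw
      set e : ℝ := ε * Real.exp (C * t) with he
      have hepos : 0 < e := by positivity
      have hqFq : ∀ v : Fin n → ℝ, q t v = Fq 1 e (Z t) 0 v := by
        intro v
        simp [hq, Fq, he]
      have hFnn : ∀ v, 0 ≤ Fq 1 e (Z t) 0 v := by
        apply Fq_nonneg
        intro v hv
        rw [← hqFq]
        exact H0 v hv
      have hFw : Fq 1 e (Z t) 0 w = 0 := by rw [← hqFq]; exact Hw
      have hcr := crossFq_zero 1 e (Z t) 0 w hFnn hFw
      -- kernel identity with v := Aᵀ w
      have hkA : w ⬝ᵥ (Z t).mulVec (Aᵀ.mulVec w) + (Aᵀ.mulVec w) ⬝ᵥ (Z t).mulVec w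
          = -(2 * e * (w ⬝ᵥ Aᵀ.mulVec w)) := by
        have := hcr (Aᵀ.mulVec w)
        simp only [crossFq, zero_dotProduct] at this
        linarith
      -- expand q'
      have hexpand : q' t w = ((Aᵀ.mulVec w) ⬝ᵥ (Z t).mulVec w
            + w ⬝ᵥ (Z t).mulVec (Aᵀ.mulVec w))
          + (γ ^ 2)⁻¹ * ∑ k, ((N k)ᵀ.mulVec w) ⬝ᵥ (Z t).mulVec ((N k)ᵀ.mulVec w)
          + e * C := by
        have hsum : w ⬝ᵥ ((∑ k, N k * Z t * (N k)ᵀ).mulVec w)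
            = ∑ k, w ⬝ᵥ ((N k * Z t * (N k)ᵀ).mulVec w) := by
          exact map_sum (qfCLM w) (fun k => N k * Z t * (N k)ᵀ) Finset.univ
        simp only [hq', Matrix.add_mulVec, dotProduct_add, Matrix.smul_mulVec,
          dotProduct_smul, smul_eq_mul]
        rw [hsum, dot_mul_left, dot_mul_right]
        rw [Finset.sum_congr rfl (fun k _ => dot_conj (N k) (Z t) w), hw, he]
        ring
      -- bounds
      have habs : ∀ i, |w i| ≤ 1 := abs_le_one_of_unit hw
      have hAbound : |w ⬝ᵥ Aᵀ.mulVec w| ≤ entrySum Aᵀ := abs_dot_mulVec_le habs habs Aᵀ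
      have hNbound : ∀ k, -(e * entrySum (N k * (N k)ᵀ))
          ≤ ((N k)ᵀ.mulVec w) ⬝ᵥ (Z t).mulVec ((N k)ᵀ.mulVec w) := by
        intro k
        have h1 := hFnn ((N k)ᵀ.mulVec w)
        simp only [Fq, one_mul, zero_dotProduct] at h1
        have h2 : ∑ i, ((N k)ᵀ.mulVec w) i ^ 2 = w ⬝ᵥ (N k * (N k)ᵀ).mulVec w := by
          rw [← dot_self_conj]
          simp [dotProduct, pow_two]
        have h3 : w ⬝ᵥ (N k * (N k)ᵀ).mulVec w ≤ entrySum (N k * (N k)ᵀ) :=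
          le_trans (le_abs_self _) (abs_dot_mulVec_le habs habs _)
        rw [h2] at h1
        nlinarith
      have hsumN : (γ ^ 2)⁻¹ * ∑ k, ((N k)ᵀ.mulVec w) ⬝ᵥ (Z t).mulVec ((N k)ᵀ.mulVec w)
          ≥ -(e * ((γ ^ 2)⁻¹ * ∑ k, entrySum (N k * (N k)ᵀ))) := by
      -- (γ²)⁻¹ ≥ 0
        have hγ2 : (0:ℝ) ≤ (γ ^ 2)⁻¹ := by positivity
        have := Finset.sum_le_sum (fun k (_ : k ∈ Finset.univ) => hNbound k)
        calc (γ ^ 2)⁻¹ * ∑ k, ((N k)ᵀ.mulVec w) ⬝ᵥ (Z t).mulVec ((N k)ᵀ.mulVec w)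
            ≥ (γ ^ 2)⁻¹ * ∑ k, -(e * entrySum (N k * (N k)ᵀ)) := by
              apply mul_le_mul_of_nonneg_left _ hγ2
              exact this
          _ = -(e * ((γ ^ 2)⁻¹ * ∑ k, entrySum (N k * (N k)ᵀ))) := by
              rw [Finset.sum_neg_distrib, ← Finset.mul_sum]
              ring
      have hAineq : -(2 * e * (w ⬝ᵥ Aᵀ.mulVec w)) ≥ -(2 * e * entrySum Aᵀ) := by
        have := abs_le.mp hAbound
        nlinarith
      have heC : e * C = e * 1 + 2 * e * entrySum Aᵀ
          + e * ((γ ^ 2)⁻¹ * ∑ k, entrySum (N k * (N k)ᵀ)) := by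
        rw [hC]; ring
      rw [hexpand]
      linarith [hkA, hsumN, hAineq, hepos, heC]
    have := positivity_lemma q q' T hqc hqd hq0 hqcross T ⟨hT, le_rfl⟩ w₀ hw₀
    simpa [hq] using this
  -- pass to the limit ε → 0
  by_contra hneg
  push_neg at hneg
  set b : ℝ := w₀ ⬝ᵥ (Z T).mulVec w₀
  have hEpos : 0 < Real.exp (C * T) := Real.exp_pos _
  have hb : b < 0 := hneg
  have := key (-b / (2 * Real.exp (C * T) * ∑ i, w₀ i ^ 2))
    (by rw [hw₀]; apply div_pos (by linarith) (by positivity))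
  rw [hw₀] at this
  have h2 : -b / (2 * Real.exp (C * T) * 1) * Real.exp (C * T) * 1 = -b / 2 := by
    field_simp
  rw [h2] at this
  linarith

end BLT

namespace BLT

noncomputable def sigmaFun {m : ℕ} {α : Type*} [Zero α] [DecidableEq α]
    (N : Fin m → α) (u : ℝ → Fin m → ℝ) : ℝ → ℝ :=
  fun s => ∑ k, (if N k = 0 then (0:ℝ) else u s k) ^ 2

lemma sigmaFun_cont {m : ℕ} {α : Type*} [Zero α] [DecidableEq α]
    (N : Fin m → α) (u : ℝ → Fin m → ℝ) (hu : Continuous u) :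
    Continuous (sigmaFun N u) := by
  apply continuous_finset_sum
  intro k _
  by_cases h : N k = 0
  · simp only [h, if_true]
    exact continuous_const
  · simp only [h, if_false]
    exact ((continuous_apply k).comp hu).pow 2

lemma sigmaFun_nonneg {m : ℕ} {α : Type*} [Zero α] [DecidableEq α]
    (N : Fin m → α) (u : ℝ → Fin m → ℝ) (s : ℝ) : 0 ≤ sigmaFun N u s :=
  Finset.sum_nonneg fun _ _ => sq_nonneg _

noncomputable def phiFun {m : ℕ} {α : Type*} [Zero α] [DecidableEq α]
    (γ : ℝ) (N : Fin m → α) (u : ℝ → Fin m → ℝ) : ℝ → ℝ :=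
  fun t => Real.exp (γ ^ 2 * ∫ s in (0:ℝ)..t, sigmaFun N u s)

lemma phiFun_pos {m : ℕ} {α : Type*} [Zero α] [DecidableEq α]
    (γ : ℝ) (N : Fin m → α) (u : ℝ → Fin m → ℝ) (t : ℝ) : 0 < phiFun γ N u t :=
  Real.exp_pos _

lemma phiFun_zero {m : ℕ} {α : Type*} [Zero α] [DecidableEq α]
    (γ : ℝ) (N : Fin m → α) (u : ℝ → Fin m → ℝ) : phiFun γ N u 0 = 1 := by
  unfold phiFun
  rw [intervalIntegral.integral_same]
  simp

lemma phiFun_hasDerivAt {m : ℕ} {α : Type*} [Zero α] [DecidableEq α]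
    (γ : ℝ) (N : Fin m → α) (u : ℝ → Fin m → ℝ) (hu : Continuous u) (t : ℝ) :
    HasDerivAt (phiFun γ N u) (phiFun γ N u t * (γ ^ 2 * sigmaFun N u t)) t := by
  have hσ := sigmaFun_cont N u hu
  have hI : HasDerivAt (fun r => ∫ s in (0:ℝ)..r, sigmaFun N u s) (sigmaFun N u t) t :=
    intervalIntegral.integral_hasDerivAt_right (hσ.intervalIntegrable _ _)
      (hσ.stronglyMeasurable.stronglyMeasurableAtFilter) hσ.continuousAt
  exact (hI.const_mul (γ ^ 2)).exp

lemma phiFun_cont {m : ℕ} {α : Type*} [Zero α] [DecidableEq α]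
    (γ : ℝ) (N : Fin m → α) (u : ℝ → Fin m → ℝ) (hu : Continuous u) :
    Continuous (phiFun γ N u) :=
  continuous_iff_continuousAt.mpr fun t => (phiFun_hasDerivAt γ N u hu t).continuousAt

lemma D_psd {n m : ℕ} (A : Matrix (Fin n) (Fin n) ℝ) (N : Fin m → Matrix (Fin n) (Fin n) ℝ)
    (γ : ℝ) (hγ : 0 < γ) (u : ℝ → Fin m → ℝ) (hu : Continuous u)
    (Z : ℝ → Matrix (Fin n) (Fin n) ℝ)
    (hZode : ∀ t, 0 ≤ t →
      HasDerivAt Z (A * Z t + Z t * Aᵀ + (γ ^ 2)⁻¹ • ∑ k, N k * Z t * (N k)ᵀ) t)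
    (x : ℝ → Fin n → ℝ)
    (hxode : ∀ t, 0 ≤ t →
      HasDerivAt x (A.mulVec (x t) + ∑ k, u t k • (N k).mulVec (x t)) t)
    (c : ℝ) (hc : 0 ≤ c)
    (h0 : ∀ w : Fin n → ℝ, (x 0 ⬝ᵥ w) ^ 2 ≤ c * (w ⬝ᵥ (Z 0).mulVec w)) :
    ∀ t, 0 ≤ t → ∀ w : Fin n → ℝ, (∑ i, w i ^ 2 = 1) →
      (x t ⬝ᵥ w) ^ 2 ≤ c * phiFun γ N u t * (w ⬝ᵥ (Z t).mulVec w) := by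
  intro T hT w₀ hw₀
  -- bound on sigma over [0,T]
  obtain ⟨t₁, ht₁, hmax⟩ := isCompact_Icc.exists_isMaxOn (α := ℝ) (s := Set.Icc (0:ℝ) T)
    ⟨0, le_rfl, hT⟩ (sigmaFun_cont N u hu).continuousOn
  set Su : ℝ := sigmaFun N u t₁ with hSu
  have hSub : ∀ t ∈ Set.Icc (0:ℝ) T, sigmaFun N u t ≤ Su := fun t ht => hmax ht
  set C : ℝ := 1 + 2 * entrySum Aᵀ + γ ^ 2 * Su + (γ ^ 2)⁻¹ * ∑ k, entrySum (N k * (N k)ᵀ)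
    with hC
  have key : ∀ ε : ℝ, 0 < ε →
      0 ≤ c * (phiFun γ N u T * (w₀ ⬝ᵥ (Z T).mulVec w₀)) + ε * Real.exp (C * T) * ∑ i, w₀ i ^ 2
        - (x T ⬝ᵥ w₀) ^ 2 := by
    intro ε hε
    set q : ℝ → (Fin n → ℝ) → ℝ :=
      fun t w => c * (phiFun γ N u t * (w ⬝ᵥ (Z t).mulVec w))
        + ε * Real.exp (C * t) * (∑ i, w i ^ 2) - (x t ⬝ᵥ w) ^ 2 with hq
    set q' : ℝ → (Fin n → ℝ) → ℝ :=
      fun t w => c * (phiFun γ N u t * (γ ^ 2 * sigmaFun N u t) * (w ⬝ᵥ (Z t).mulVec w)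
          + phiFun γ N u t
            * (w ⬝ᵥ ((A * Z t + Z t * Aᵀ + (γ ^ 2)⁻¹ • ∑ k, N k * Z t * (N k)ᵀ).mulVec w)))
        + ε * (Real.exp (C * t) * C) * (∑ i, w i ^ 2)
        - (((A.mulVec (x t) + ∑ k, u t k • (N k).mulVec (x t)) ⬝ᵥ w) * (x t ⬝ᵥ w)
            + (x t ⬝ᵥ w) * ((A.mulVec (x t) + ∑ k, u t k • (N k).mulVec (x t)) ⬝ᵥ w)) with hq'
    have hZcont : ContinuousOn Z (Set.Icc 0 T) := fun t ht =>
      (hZode t ht.1).continuousAt.continuousWithinAt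
    have hxcont : ContinuousOn x (Set.Icc 0 T) := fun t ht =>
      (hxode t ht.1).continuousAt.continuousWithinAt
    -- continuity
    have hqc : ContinuousOn (fun tw : ℝ × (Fin n → ℝ) => q tw.1 tw.2)
        (Set.Icc 0 T ×ˢ {w : Fin n → ℝ | ∑ i, w i ^ 2 = 1}) := by
      apply ContinuousOn.sub
      apply ContinuousOn.add
      · apply ContinuousOn.mul continuousOn_const
        apply ContinuousOn.mul
        · exact ((phiFun_cont γ N u hu).comp continuous_fst).continuousOn
        · have hrw : (fun tw : ℝ × (Fin n → ℝ) => tw.2 ⬝ᵥ (Z tw.1).mulVec tw.2)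
              = fun tw : ℝ × (Fin n → ℝ) => ∑ i, ∑ j, tw.2 i * Z tw.1 i j * tw.2 j := by
            funext tw
            simp [dotProduct, Matrix.mulVec, Finset.mul_sum, mul_assoc]
          show ContinuousOn (fun tw : ℝ × (Fin n → ℝ) => tw.2 ⬝ᵥ (Z tw.1).mulVec tw.2) _
          rw [hrw]
          apply continuousOn_finset_sum
          intro i _
          apply continuousOn_finset_sum
          intro j _
          have h2 : ContinuousOn (fun tw : ℝ × (Fin n → ℝ) => Z tw.1 i j)
              (Set.Icc 0 T ×ˢ {w : Fin n → ℝ | ∑ i, w i ^ 2 = 1}) := by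
            apply (continuousOn_entry hZcont i j).comp continuous_fst.continuousOn
            intro tw htw
            exact htw.1
          exact ((((continuous_apply i).comp continuous_snd).continuousOn.mul h2).mul
            ((continuous_apply j).comp continuous_snd).continuousOn)
      · exact (((continuous_const.mul ((continuous_const.mul continuous_fst).rexp)).mul
          (continuous_finset_sum _ fun i _ =>
            ((continuous_apply i).comp continuous_snd).pow 2))).continuousOn
      · have hdot : ContinuousOn (fun tw : ℝ × (Fin n → ℝ) => x tw.1 ⬝ᵥ tw.2)
            (Set.Icc 0 T ×ˢ {w : Fin n → ℝ | ∑ i, w i ^ 2 = 1}) := by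
          have hrw : (fun tw : ℝ × (Fin n → ℝ) => x tw.1 ⬝ᵥ tw.2)
              = fun tw : ℝ × (Fin n → ℝ) => ∑ i, x tw.1 i * tw.2 i := rfl
          rw [hrw]
          apply continuousOn_finset_sum
          intro i _
          have h2 : ContinuousOn (fun tw : ℝ × (Fin n → ℝ) => x tw.1 i)
              (Set.Icc 0 T ×ˢ {w : Fin n → ℝ | ∑ i, w i ^ 2 = 1}) := by
            have hxi : ContinuousOn (fun t => x t i) (Set.Icc 0 T) :=
              ((continuous_apply i).comp_continuousOn hxcont)
            apply hxi.comp continuous_fst.continuousOn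
            intro tw htw
            exact htw.1
          exact h2.mul ((continuous_apply i).comp continuous_snd).continuousOn
        exact hdot.pow 2
    -- derivative
    have hqd : ∀ t ∈ Set.Icc (0:ℝ) T, ∀ w : Fin n → ℝ, (∑ i, w i ^ 2 = 1) →
        HasDerivAt (fun s => q s w) (q' t w) t := by
      intro t ht w hw
      have hφd := phiFun_hasDerivAt γ N u hu t
      have hQzd := hasDerivAt_qf (hZode t ht.1) w
      have h1 := (hφd.mul hQzd).const_mul c
      have hlin : HasDerivAt (fun s : ℝ => C * s) C t := by
        simpa only [mul_one] using (hasDerivAt_id' t).const_mul C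
      have h2 := (hlin.exp.const_mul ε).mul_const (∑ i, w i ^ 2)
      have hxd := hasDerivAt_dot (hxode t ht.1) w
      have h3 : HasDerivAt (fun s => (x s ⬝ᵥ w) ^ 2)
          (((A.mulVec (x t) + ∑ k, u t k • (N k).mulVec (x t)) ⬝ᵥ w) * (x t ⬝ᵥ w)
            + (x t ⬝ᵥ w) * ((A.mulVec (x t) + ∑ k, u t k • (N k).mulVec (x t)) ⬝ᵥ w)) t := by
        rw [show (fun s => (x s ⬝ᵥ w) ^ 2) = (fun s => x s ⬝ᵥ w) * (fun s => x s ⬝ᵥ w) from funext fun s => pow_two _]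
        exact hxd.mul hxd
      exact ((h1.add h2).sub h3)
    -- initial positivity
    have hq0 : ∀ w : Fin n → ℝ, (∑ i, w i ^ 2 = 1) → 0 < q 0 w := by
      intro w hw
      have h1 := h0 w
      simp only [hq, phiFun_zero, hw, mul_one, one_mul]
      have : Real.exp (C * 0) = 1 := by simp
      rw [this]
      nlinarith
    -- crossing condition
    have hqcross : ∀ t ∈ Set.Icc (0:ℝ) T, ∀ w : Fin n → ℝ, (∑ i, w i ^ 2 = 1) →
        (∀ v : Fin n → ℝ, (∑ i, v i ^ 2 = 1) → 0 ≤ q t v) → q t w = 0 → 0 < q' t w := by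
      intro t ht w hw H0 Hw
      set e : ℝ := ε * Real.exp (C * t) with he
      have hepos : 0 < e := by positivity
      have hqFq : ∀ v : Fin n → ℝ, q t v = Fq (c * phiFun γ N u t) e (Z t) (x t) v := by
        intro v
        simp only [hq, Fq, he]
        ring
      have hFnn : ∀ v, 0 ≤ Fq (c * phiFun γ N u t) e (Z t) (x t) v := by
        apply Fq_nonneg
        intro v hv
        rw [← hqFq]
        exact H0 v hv
      have hFw : Fq (c * phiFun γ N u t) e (Z t) (x t) w = 0 := by rw [← hqFq]; exact Hw
      have hcr := crossFq_zero _ _ _ _ w hFnn hFw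
      -- E1 : value identity at w
      have E1 : c * phiFun γ N u t * (w ⬝ᵥ (Z t).mulVec w) = (x t ⬝ᵥ w) ^ 2 - e := by
        have := hFw
        simp only [Fq, hw, mul_one] at this
        linarith
      -- E2 : cross identity with Aᵀ w
      have hxA : x t ⬝ᵥ Aᵀ.mulVec w = A.mulVec (x t) ⬝ᵥ w := by
        rw [Matrix.dotProduct_mulVec, Matrix.vecMul_transpose]
      have E2 : c * phiFun γ N u t
            * (w ⬝ᵥ (Z t).mulVec (Aᵀ.mulVec w) + (Aᵀ.mulVec w) ⬝ᵥ (Z t).mulVec w)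
          = 2 * (x t ⬝ᵥ w) * (A.mulVec (x t) ⬝ᵥ w) - 2 * e * (w ⬝ᵥ Aᵀ.mulVec w) := by
        have h := hcr (Aᵀ.mulVec w)
        simp only [crossFq] at h
        rw [hxA] at h
        linarith
      -- E3 : per-k lower bounds, summed
      have hxN : ∀ k, x t ⬝ᵥ (N k)ᵀ.mulVec w = (N k).mulVec (x t) ⬝ᵥ w := fun k => by
        rw [Matrix.dotProduct_mulVec, Matrix.vecMul_transpose]
      have habs : ∀ i, |w i| ≤ 1 := abs_le_one_of_unit hw
      have E3 : ∀ k, ((N k).mulVec (x t) ⬝ᵥ w) ^ 2 - e * entrySum (N k * (N k)ᵀ)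
          ≤ c * phiFun γ N u t
            * ((N k)ᵀ.mulVec w ⬝ᵥ (Z t).mulVec ((N k)ᵀ.mulVec w)) := by
        intro k
        have h1 := hFnn ((N k)ᵀ.mulVec w)
        simp only [Fq] at h1
        rw [hxN k] at h1
        have h2 : ∑ i, ((N k)ᵀ.mulVec w) i ^ 2 = w ⬝ᵥ (N k * (N k)ᵀ).mulVec w := by
          rw [← dot_self_conj]
          simp [dotProduct, pow_two]
        have h3 : w ⬝ᵥ (N k * (N k)ᵀ).mulVec w ≤ entrySum (N k * (N k)ᵀ) :=
          le_trans (le_abs_self _) (abs_dot_mulVec_le habs habs _)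
        rw [h2] at h1
        nlinarith
      have E3sum : (∑ k, ((N k).mulVec (x t) ⬝ᵥ w) ^ 2)
            - e * (∑ k, entrySum (N k * (N k)ᵀ))
          ≤ c * phiFun γ N u t
            * (∑ k, (N k)ᵀ.mulVec w ⬝ᵥ (Z t).mulVec ((N k)ᵀ.mulVec w)) := by
        have h1 := Finset.sum_le_sum (fun k (_ : k ∈ Finset.univ) => E3 k)
        rw [Finset.sum_sub_distrib] at h1
        simp only [← Finset.mul_sum] at h1
        exact h1
      have E8 : (γ ^ 2)⁻¹ * ((∑ k, ((N k).mulVec (x t) ⬝ᵥ w) ^ 2)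
            - e * (∑ k, entrySum (N k * (N k)ᵀ)))
          ≤ (γ ^ 2)⁻¹ * (c * phiFun γ N u t
            * (∑ k, (N k)ᵀ.mulVec w ⬝ᵥ (Z t).mulVec ((N k)ᵀ.mulVec w))) := by
        apply mul_le_mul_of_nonneg_left E3sum
        positivity
      -- E4 : expansion of q'
      have E4 : q' t w = γ ^ 2 * sigmaFun N u t * (c * phiFun γ N u t * (w ⬝ᵥ (Z t).mulVec w))
          + c * phiFun γ N u t
            * (w ⬝ᵥ (Z t).mulVec (Aᵀ.mulVec w) + (Aᵀ.mulVec w) ⬝ᵥ (Z t).mulVec w)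
          + (γ ^ 2)⁻¹ * (c * phiFun γ N u t
            * (∑ k, (N k)ᵀ.mulVec w ⬝ᵥ (Z t).mulVec ((N k)ᵀ.mulVec w)))
          + e * C
          - 2 * (x t ⬝ᵥ w) * (A.mulVec (x t) ⬝ᵥ w)
          - 2 * (x t ⬝ᵥ w) * (∑ k, u t k * ((N k).mulVec (x t) ⬝ᵥ w)) := by
        have hsumZ : w ⬝ᵥ ((∑ k, N k * Z t * (N k)ᵀ).mulVec w)
            = ∑ k, w ⬝ᵥ ((N k * Z t * (N k)ᵀ).mulVec w) :=
          map_sum (qfCLM w) (fun k => N k * Z t * (N k)ᵀ) Finset.univ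
        have hsumx : (∑ k, u t k • (N k).mulVec (x t)) ⬝ᵥ w
            = ∑ k, u t k * ((N k).mulVec (x t) ⬝ᵥ w) := by
          have h1 : (∑ k, u t k • (N k).mulVec (x t)) ⬝ᵥ w
              = ∑ k, (u t k • (N k).mulVec (x t)) ⬝ᵥ w :=
            map_sum (dotCLM w) (fun k => u t k • (N k).mulVec (x t)) Finset.univ
          rw [h1]
          exact Finset.sum_congr rfl fun k _ => by
            rw [smul_dotProduct, smul_eq_mul]
        simp only [hq', Matrix.add_mulVec, dotProduct_add, Matrix.smul_mulVec,
          dotProduct_smul, smul_eq_mul, add_dotProduct]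
        rw [hsumZ, hsumx, dot_mul_left, dot_mul_right,
          Finset.sum_congr rfl (fun k _ => dot_conj (N k) (Z t) w), hw, he]
        ring
      -- E5 : sum of squares
      have E5 : 0 ≤ γ ^ 2 * sigmaFun N u t * (x t ⬝ᵥ w) ^ 2
          + (γ ^ 2)⁻¹ * (∑ k, ((N k).mulVec (x t) ⬝ᵥ w) ^ 2)
          - 2 * (x t ⬝ᵥ w) * (∑ k, u t k * ((N k).mulVec (x t) ⬝ᵥ w)) := by
        have hterm : ∀ k, (0:ℝ) ≤ γ ^ 2 * (if N k = 0 then (0:ℝ) else u t k) ^ 2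
              * (x t ⬝ᵥ w) ^ 2
            + (γ ^ 2)⁻¹ * ((N k).mulVec (x t) ⬝ᵥ w) ^ 2
            - 2 * (x t ⬝ᵥ w) * (u t k * ((N k).mulVec (x t) ⬝ᵥ w)) := by
          intro k
          by_cases hk : N k = 0
          · simp [hk, Matrix.zero_mulVec, zero_dotProduct]
          · simp only [hk, if_false]
            have hkey : γ ^ 2 * u t k ^ 2 * (x t ⬝ᵥ w) ^ 2
                  + (γ ^ 2)⁻¹ * ((N k).mulVec (x t) ⬝ᵥ w) ^ 2
                  - 2 * (x t ⬝ᵥ w) * (u t k * ((N k).mulVec (x t) ⬝ᵥ w))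
                = (γ * u t k * (x t ⬝ᵥ w) - γ⁻¹ * ((N k).mulVec (x t) ⬝ᵥ w)) ^ 2 := by
              field_simp
              ring
            rw [hkey]
            positivity
        have hsum := Finset.sum_nonneg (fun k (_ : k ∈ Finset.univ) => hterm k)
        have heq : ∑ k, (γ ^ 2 * (if N k = 0 then (0:ℝ) else u t k) ^ 2 * (x t ⬝ᵥ w) ^ 2
              + (γ ^ 2)⁻¹ * ((N k).mulVec (x t) ⬝ᵥ w) ^ 2
              - 2 * (x t ⬝ᵥ w) * (u t k * ((N k).mulVec (x t) ⬝ᵥ w)))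
            = γ ^ 2 * sigmaFun N u t * (x t ⬝ᵥ w) ^ 2
              + (γ ^ 2)⁻¹ * (∑ k, ((N k).mulVec (x t) ⬝ᵥ w) ^ 2)
              - 2 * (x t ⬝ᵥ w) * (∑ k, u t k * ((N k).mulVec (x t) ⬝ᵥ w)) := by
          rw [Finset.sum_sub_distrib, Finset.sum_add_distrib]
          unfold sigmaFun
          congr 1
          · congr 1
            · rw [Finset.mul_sum, Finset.sum_mul]
            · rw [Finset.mul_sum]
          · rw [Finset.mul_sum]
        rw [heq] at hsum
        exact hsum
      -- E1'' scaled version of E1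
      have E1'' : γ ^ 2 * sigmaFun N u t * (c * phiFun γ N u t * (w ⬝ᵥ (Z t).mulVec w))
          = γ ^ 2 * sigmaFun N u t * (x t ⬝ᵥ w) ^ 2 - γ ^ 2 * sigmaFun N u t * e := by
        rw [E1]
        ring
      -- remaining bounds
      have hsA : |w ⬝ᵥ Aᵀ.mulVec w| ≤ entrySum Aᵀ := abs_dot_mulVec_le habs habs Aᵀ
      have E7 : 2 * e * (w ⬝ᵥ Aᵀ.mulVec w) ≤ 2 * e * entrySum Aᵀ := by
        have := (abs_le.mp hsA).2
        nlinarith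
      have E6 : γ ^ 2 * sigmaFun N u t * e ≤ γ ^ 2 * Su * e := by
        have h1 := hSub t ht
        have h2 : (0:ℝ) ≤ γ ^ 2 * e := by positivity
        nlinarith
      have heC : e * C = e * 1 + 2 * e * entrySum Aᵀ + γ ^ 2 * Su * e
          + (γ ^ 2)⁻¹ * (e * (∑ k, entrySum (N k * (N k)ᵀ))) := by
        rw [hC]
        ring
      rw [E4, E1'']
      nlinarith [E2, E8, E5, E6, E7, heC, hepos]
    have := positivity_lemma q q' T hqc hqd hq0 hqcross T ⟨hT, le_rfl⟩ w₀ hw₀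
    simpa only [hq] using this
  -- limit ε → 0
  by_contra hneg
  push_neg at hneg
  set b : ℝ := c * phiFun γ N u T * (w₀ ⬝ᵥ (Z T).mulVec w₀) - (x T ⬝ᵥ w₀) ^ 2 with hb
  have hbneg : b < 0 := by simp only [hb]; linarith
  have hEpos : 0 < Real.exp (C * T) := Real.exp_pos _
  have hk := key (-b / (2 * Real.exp (C * T)))
    (div_pos (by linarith) (by positivity))
  rw [hw₀] at hk
  have h2 : -b / (2 * Real.exp (C * T)) * Real.exp (C * T) * 1 = -b / 2 := by
    field_simp
  rw [h2] at hk
  have : c * (phiFun γ N u T * (w₀ ⬝ᵥ (Z T).mulVec w₀)) - (x T ⬝ᵥ w₀) ^ 2 = b := by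
    rw [hb]; ring
  linarith [hk, this]

end BLT

namespace BLT

lemma dot_self_nonneg' {k : ℕ} (v : Fin k → ℝ) : 0 ≤ v ⬝ᵥ v :=
  Finset.sum_nonneg fun i _ => mul_self_nonneg _

lemma gram_rect {n q : ℕ} (B : Matrix (Fin n) (Fin q) ℝ) (w : Fin n → ℝ) :
    w ⬝ᵥ (B * Bᵀ).mulVec w = (Bᵀ.mulVec w) ⬝ᵥ (Bᵀ.mulVec w) := by
  rw [← Matrix.mulVec_mulVec, Matrix.dotProduct_mulVec w B, ← Matrix.mulVec_transpose]

end BLT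

open BLT

/-- Proposition 3.1: for the homogeneous bilinear system with initial state
`X₀ v₀`, any unit eigenvector `p` of the Gramian `P₀ = ∫₀^∞ Z_γ(s, X₀X₀ᵀ) ds` with eigenvalue
`λ` satisfies `‖⟨x_{x₀}(·), p⟩‖_{L²} ≤ λ^{1/2} exp{0.5 ‖γ u⁰‖²_{L²}} ‖v₀‖₂`. -/
theorem dominant_subspace_estimate_P0
    {n q m : ℕ}
    (A : Matrix (Fin n) (Fin n) ℝ) (N : Fin m → Matrix (Fin n) (Fin n) ℝ)
    (X₀ : Matrix (Fin n) (Fin q) ℝ) (v₀ : Fin q → ℝ)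
    (γ : ℝ) (hγ : 0 < γ)
    (hstab : ∀ μ ∈ spectrum ℂ
      (((1 : Matrix (Fin n) (Fin n) ℝ) ⊗ₖ A + A ⊗ₖ (1 : Matrix (Fin n) (Fin n) ℝ)
        + (γ ^ 2)⁻¹ • ∑ k, N k ⊗ₖ N k).map (Complex.ofReal : ℝ → ℂ)), μ.re < 0)
    (u : ℝ → Fin m → ℝ) (hu : Continuous u)
    (huL2 : IntegrableOn (fun s => ∑ k, (u s k) ^ 2) (Set.Ioi 0))
    -- `Z = Z_γ(·, X₀X₀ᵀ)` and `P₀ = ∫₀^∞ Z(s) ds`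
    (Z : ℝ → Matrix (Fin n) (Fin n) ℝ)
    (hZ0 : Z 0 = X₀ * X₀ᵀ)
    (hZode : ∀ t, 0 ≤ t →
      HasDerivAt Z (A * Z t + Z t * Aᵀ + (γ ^ 2)⁻¹ • ∑ k, N k * Z t * (N k)ᵀ) t)
    (hZint : @IntegrableOn _ _ _ _ SeminormedAddGroup.toContinuousENorm Z (Set.Ioi 0) volume)
    -- `x` solves the homogeneous bilinear system with `x(0) = X₀ v₀`
    (x : ℝ → Fin n → ℝ) (hx0 : x 0 = X₀.mulVec v₀)
    (hxode : ∀ t, 0 ≤ t →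
      HasDerivAt x (A.mulVec (x t) + ∑ k, u t k • (N k).mulVec (x t)) t)
    -- `p` is a unit eigenvector of `P₀` with eigenvalue `lam ≥ 0`
    (p : Fin n → ℝ) (hp : ∑ i, p i ^ 2 = 1)
    (lam : ℝ) (hlam : 0 ≤ lam)
    (heig : (∫ s in Set.Ioi (0 : ℝ), Z s).mulVec p = lam • p) :
    Real.sqrt (∫ t in Set.Ioi (0 : ℝ), (∑ i, x t i * p i) ^ 2)
      ≤ Real.sqrt lam
        * Real.exp (0.5 * ∫ v in Set.Ioi (0 : ℝ),
            ∑ k, (γ * (if N k = 0 then (0 : ℝ) else u v k)) ^ 2)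
        * Real.sqrt (∑ i, v₀ i ^ 2) := by

  classical
  set c : ℝ := ∑ i, v₀ i ^ 2 with hc
  have hcnn : 0 ≤ c := Finset.sum_nonneg fun _ _ => sq_nonneg _
  -- the integrand in the exponent equals γ² · sigmaFun
  have hpoint : ∀ v : ℝ, (∑ k, (γ * (if N k = 0 then (0:ℝ) else u v k)) ^ 2)
      = γ ^ 2 * sigmaFun N u v := by
    intro v
    unfold sigmaFun
    rw [Finset.mul_sum]
    refine Finset.sum_congr rfl fun k _ => ?_
    by_cases hk : N k = 0 <;> simp [hk] <;> ring
  have hIeq : (∫ v in Set.Ioi (0:ℝ), ∑ k, (γ * (if N k = 0 then (0:ℝ) else u v k)) ^ 2)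
      = γ ^ 2 * ∫ v in Set.Ioi (0:ℝ), sigmaFun N u v := by
    rw [← MeasureTheory.integral_const_mul]
    exact MeasureTheory.integral_congr_ae (Filter.Eventually.of_forall fun v => hpoint v)
  set Itot : ℝ := γ ^ 2 * ∫ v in Set.Ioi (0:ℝ), sigmaFun N u v with hItot
  set E : ℝ := Real.exp (0.5 * Itot) with hE
  have hEpos : 0 < E := Real.exp_pos _
  have hE2 : E ^ 2 = Real.exp Itot := by
    rw [hE, pow_two, ← Real.exp_add]
    congr 1
    ring
  -- sigma is integrable on (0,∞)
  have hσint : IntegrableOn (sigmaFun N u) (Set.Ioi 0) := by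
    apply MeasureTheory.Integrable.mono' huL2
      ((sigmaFun_cont N u hu).aestronglyMeasurable)
    filter_upwards with s
    rw [Real.norm_eq_abs, abs_of_nonneg (sigmaFun_nonneg N u s)]
    unfold sigmaFun
    refine Finset.sum_le_sum fun k _ => ?_
    by_cases hk : N k = 0 <;> simp [hk] <;> positivity
  -- φ(t) ≤ exp(Itot) = E² for t ≥ 0
  have hφle : ∀ t : ℝ, 0 ≤ t → phiFun γ N u t ≤ E ^ 2 := by
    intro t ht
    rw [hE2]
    apply Real.exp_le_exp.mpr
    apply mul_le_mul_of_nonneg_left _ (sq_nonneg γ)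
    rw [intervalIntegral.integral_of_le ht]
    apply MeasureTheory.setIntegral_mono_set hσint
    · filter_upwards with s
      exact sigmaFun_nonneg N u s
    · exact (Set.Ioc_subset_Ioi_self).eventuallyLE
  -- Z is positive semidefinite along unit vectors
  have hZ0nn : ∀ w : Fin n → ℝ, 0 ≤ w ⬝ᵥ (Z 0).mulVec w := by
    intro w
    rw [hZ0, gram_rect]
    exact dot_self_nonneg' _
  have hZpsd := Z_psd A N γ hγ Z hZ0nn hZode
  -- initial condition for the comparison function
  have h0 : ∀ w : Fin n → ℝ, (x 0 ⬝ᵥ w) ^ 2 ≤ c * (w ⬝ᵥ (Z 0).mulVec w) := by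
    intro w
    rw [hx0, hZ0, gram_rect]
    have h1 : X₀.mulVec v₀ ⬝ᵥ w = (X₀ᵀ.mulVec w) ⬝ᵥ v₀ := by
      rw [dotProduct_comm, Matrix.dotProduct_mulVec w X₀, ← Matrix.mulVec_transpose]
    rw [h1]
    have hCS := Finset.sum_mul_sq_le_sq_mul_sq Finset.univ (X₀ᵀ.mulVec w) v₀
    have h2 : (X₀ᵀ.mulVec w) ⬝ᵥ v₀ = ∑ j, (X₀ᵀ.mulVec w) j * v₀ j := rfl
    have h3 : (X₀ᵀ.mulVec w) ⬝ᵥ (X₀ᵀ.mulVec w) = ∑ j, (X₀ᵀ.mulVec w) j ^ 2 := by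
      simp [dotProduct, pow_two]
    rw [h2, h3, hc]
    calc (∑ j, (X₀ᵀ.mulVec w) j * v₀ j) ^ 2
        ≤ (∑ j, (X₀ᵀ.mulVec w) j ^ 2) * ∑ j, v₀ j ^ 2 := hCS
      _ = (∑ i, v₀ i ^ 2) * ∑ j, (X₀ᵀ.mulVec w) j ^ 2 := by ring
  -- the comparison estimate
  have hD := D_psd A N γ hγ u hu Z hZode x hxode c hcnn h0
  -- Qz := p ⬝ᵥ Z t p is integrable with integral lam
  have hQzint : IntegrableOn (fun t => p ⬝ᵥ (Z t).mulVec p) (Set.Ioi 0) :=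
    (qfCLM p).integrable_comp hZint
  have hdotpp : p ⬝ᵥ p = 1 := by
    have : p ⬝ᵥ p = ∑ i, p i ^ 2 := by simp [dotProduct, pow_two]
    rw [this, hp]
  have hQzval : (∫ t in Set.Ioi (0:ℝ), p ⬝ᵥ (Z t).mulVec p) = lam := by
    have h1 : (∫ t in Set.Ioi (0:ℝ), qfCLM p (Z t)) = qfCLM p (∫ s in Set.Ioi (0:ℝ), Z s) :=
      (qfCLM p).integral_comp_comm hZint
    have h2 : qfCLM p (∫ s in Set.Ioi (0:ℝ), Z s) = lam := by
      rw [qfCLM_apply, heig, dotProduct_smul, smul_eq_mul, hdotpp, mul_one]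
    rw [← h2, ← h1]
    rfl
  -- pointwise bound for the squared output
  have hQznn : ∀ t ∈ Set.Ioi (0:ℝ), 0 ≤ p ⬝ᵥ (Z t).mulVec p := fun t ht =>
    hZpsd t (le_of_lt ht) p hp
  have hgb : ∀ t ∈ Set.Ioi (0:ℝ), (x t ⬝ᵥ p) ^ 2 ≤ c * E ^ 2 * (p ⬝ᵥ (Z t).mulVec p) := by
    intro t ht
    have h1 := hD t (le_of_lt ht) p hp
    have h2 : c * phiFun γ N u t * (p ⬝ᵥ (Z t).mulVec p)
        ≤ c * E ^ 2 * (p ⬝ᵥ (Z t).mulVec p) := by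
      apply mul_le_mul_of_nonneg_right _ (hQznn t ht)
      exact mul_le_mul_of_nonneg_left (hφle t (le_of_lt ht)) hcnn
    linarith
  -- integrability of the squared output
  have hgcont : ContinuousOn (fun t => (x t ⬝ᵥ p) ^ 2) (Set.Ioi 0) := fun t ht =>
    (((hasDerivAt_dot (hxode t (le_of_lt ht)) p).continuousAt).continuousWithinAt).pow 2
  have hbintegrable : IntegrableOn (fun t => c * E ^ 2 * (p ⬝ᵥ (Z t).mulVec p)) (Set.Ioi 0) :=
    hQzint.const_mul _
  have hgint : IntegrableOn (fun t => (x t ⬝ᵥ p) ^ 2) (Set.Ioi 0) := by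
    apply MeasureTheory.Integrable.mono' hbintegrable
      (hgcont.aestronglyMeasurable measurableSet_Ioi)
    rw [MeasureTheory.ae_restrict_iff' measurableSet_Ioi]
    filter_upwards with t ht
    rw [Real.norm_eq_abs, abs_of_nonneg (sq_nonneg _)]
    exact hgb t ht
  -- integral bound
  have hIle : (∫ t in Set.Ioi (0:ℝ), (x t ⬝ᵥ p) ^ 2) ≤ lam * (E ^ 2 * c) := by
    have h1 : (∫ t in Set.Ioi (0:ℝ), (x t ⬝ᵥ p) ^ 2)
        ≤ ∫ t in Set.Ioi (0:ℝ), c * E ^ 2 * (p ⬝ᵥ (Z t).mulVec p) := by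
      apply MeasureTheory.integral_mono_ae hgint hbintegrable
      have hae : ∀ᵐ t ∂(MeasureTheory.volume.restrict (Set.Ioi (0:ℝ))),
          (x t ⬝ᵥ p) ^ 2 ≤ c * E ^ 2 * (p ⬝ᵥ (Z t).mulVec p) := by
        rw [MeasureTheory.ae_restrict_iff' measurableSet_Ioi]
        filter_upwards with t ht
        exact hgb t ht
      exact hae
    have h2 : (∫ t in Set.Ioi (0:ℝ), c * E ^ 2 * (p ⬝ᵥ (Z t).mulVec p))
        = c * E ^ 2 * lam := by
      rw [MeasureTheory.integral_const_mul, hQzval]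
    rw [h2] at h1
    linarith [h1]
  -- conclude
  have hgoal : Real.sqrt (∫ t in Set.Ioi (0:ℝ), (x t ⬝ᵥ p) ^ 2)
      ≤ Real.sqrt lam * E * Real.sqrt c := by
    calc Real.sqrt (∫ t in Set.Ioi (0:ℝ), (x t ⬝ᵥ p) ^ 2)
        ≤ Real.sqrt (lam * (E ^ 2 * c)) := Real.sqrt_le_sqrt hIle
      _ = Real.sqrt lam * (Real.sqrt (E ^ 2) * Real.sqrt c) := by
          rw [Real.sqrt_mul hlam, Real.sqrt_mul (sq_nonneg E)]
      _ = Real.sqrt lam * E * Real.sqrt c := by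
          rw [Real.sqrt_sq (le_of_lt hEpos)]
          ring
  rw [hIeq]
  exact hgoal
end

section
/- Let 𝒜 ∈ ℝ^{n×n}, 𝒩_1,…,𝒩_m ∈ ℝ^{n×n} and X ∈ ℝ^{n×q} be partitioned into blocks 𝒜 = [𝒜₁₁ 𝒜₁₂; 𝒜₂₁ 𝒜₂₂], 𝒩_k = [𝒩_{k,11} 𝒩_{k,12}; 𝒩_{k,21} 𝒩_{k,22}], X = [X₁; X₂] with 𝒜₁₁, 𝒩_{k,11} ∈ ℝ^{r×r}, and let Θ = diag(Θ₁, Θ₂) be block-diagonal with symmetric positive semidefinite blocks Θ₁ ∈ ℝ^{r×r} and Θ₂ ∈ ℝ^{(n−r)×(n−r)}, and γ > 0. If 𝒜 Θ + Θ 𝒜^⊤ + γ^{-2} Σ_{k=1}^m 𝒩_k Θ 𝒩_k^⊤ = −X X^⊤, then the truncated blocks satisfy the inequality 𝒜₁₁ Θ₁ + Θ₁ 𝒜₁₁^⊤ + γ^{-2} Σ_{k=1}^m 𝒩_{k,11} Θ₁ 𝒩_{k,11}^⊤ ≤ −X₁ X₁^⊤ in the positive semidefinite order. -/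
open MeasureTheory Matrix
open scoped Classical

set_option linter.unusedVariables false


private lemma sum_fromBlocks {α : Type*} [AddCommMonoid α] {ι n l o m : Type*} (t : Finset ι)
    (A : ι → Matrix n l α) (B : ι → Matrix n m α) (C : ι → Matrix o l α) (D : ι → Matrix o m α) :
    ∑ k ∈ t, Matrix.fromBlocks (A k) (B k) (C k) (D k)
      = Matrix.fromBlocks (∑ k ∈ t, A k) (∑ k ∈ t, B k) (∑ k ∈ t, C k) (∑ k ∈ t, D k) := by
  ext i j
  cases i <;> cases j <;> simp [Matrix.sum_apply]

private lemma psd_smul {n : Type*} [Fintype n] {M : Matrix n n ℝ} (hM : M.PosSemidef)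
    {c : ℝ} (hc : 0 ≤ c) : (c • M).PosSemidef := by
  refine ⟨?_, fun x => ?_⟩
  · unfold Matrix.IsHermitian
    rw [Matrix.conjTranspose_smul, hM.1.eq]
    simp
  · exact (hM.smul hc).2 x

/-- truncation of the balanced reachability equation: if the full balanced
generalized Lyapunov equation holds with block-diagonal PSD `Θ = diag(Θ₁, Θ₂)`, then the
truncated blocks satisfy `𝒜₁₁ Θ₁ + Θ₁ 𝒜₁₁ᵀ + γ⁻² ∑ₖ 𝒩_{k,11} Θ₁ 𝒩_{k,11}ᵀ ≤ −X₁ X₁ᵀ`. -/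
theorem truncated_lyapunov_inequality
    {r s q m : ℕ} (γ : ℝ) (hγ : 0 < γ)
    (A11 : Matrix (Fin r) (Fin r) ℝ) (A12 : Matrix (Fin r) (Fin s) ℝ)
    (A21 : Matrix (Fin s) (Fin r) ℝ) (A22 : Matrix (Fin s) (Fin s) ℝ)
    (N11 : Fin m → Matrix (Fin r) (Fin r) ℝ) (N12 : Fin m → Matrix (Fin r) (Fin s) ℝ)
    (N21 : Fin m → Matrix (Fin s) (Fin r) ℝ) (N22 : Fin m → Matrix (Fin s) (Fin s) ℝ)
    (X1 : Matrix (Fin r) (Fin q) ℝ) (X2 : Matrix (Fin s) (Fin q) ℝ)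
    (Θ1 : Matrix (Fin r) (Fin r) ℝ) (Θ2 : Matrix (Fin s) (Fin s) ℝ)
    (hΘ1 : Θ1.PosSemidef) (hΘ2 : Θ2.PosSemidef)
    (heq : Matrix.fromBlocks A11 A12 A21 A22 * Matrix.fromBlocks Θ1 0 0 Θ2
        + Matrix.fromBlocks Θ1 0 0 Θ2 * (Matrix.fromBlocks A11 A12 A21 A22)ᵀ
        + (γ ^ 2)⁻¹ • ∑ k,
            Matrix.fromBlocks (N11 k) (N12 k) (N21 k) (N22 k) * Matrix.fromBlocks Θ1 0 0 Θ2
              * (Matrix.fromBlocks (N11 k) (N12 k) (N21 k) (N22 k))ᵀ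
      = -(Matrix.fromRows X1 X2 * (Matrix.fromRows X1 X2)ᵀ)) :
    (-(X1 * X1ᵀ)
      - (A11 * Θ1 + Θ1 * A11ᵀ + (γ ^ 2)⁻¹ • ∑ k, N11 k * Θ1 * (N11 k)ᵀ)).PosSemidef := by
  have hc : (0:ℝ) ≤ (γ ^ 2)⁻¹ := by positivity
  -- rewrite heq in fromBlocks normal form
  rw [Matrix.fromBlocks_transpose, Matrix.transpose_fromRows, Matrix.fromRows_mul_fromCols]
    at heq
  simp only [Matrix.fromBlocks_multiply, Matrix.fromBlocks_transpose, Matrix.mul_zero,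
    Matrix.zero_mul, add_zero, zero_add] at heq
  rw [sum_fromBlocks, Matrix.fromBlocks_smul, Matrix.fromBlocks_add, Matrix.fromBlocks_add,
    Matrix.fromBlocks_neg] at heq
  have h11 := (Matrix.fromBlocks_inj.mp heq).1
  have key : -(X1 * X1ᵀ)
      - (A11 * Θ1 + Θ1 * A11ᵀ + (γ ^ 2)⁻¹ • ∑ k, N11 k * Θ1 * (N11 k)ᵀ)
      = (γ ^ 2)⁻¹ • ∑ k, N12 k * Θ2 * (N12 k)ᵀ := by
    have := h11
    rw [Finset.sum_add_distrib, smul_add] at this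
    linear_combination (norm := abel) -this
  rw [key]
  refine psd_smul ?_ hc
  refine Finset.sum_induction _ Matrix.PosSemidef
    (fun a b ha hb => ha.add hb) Matrix.PosSemidef.zero (fun k _ => ?_)
  simpa [Matrix.conjTranspose_eq_transpose_of_trivial] using
    hΘ2.mul_mul_conjTranspose_same (N12 k)
end
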